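/- arXiv:1305.4909 — 6 statements merged into one kernel-verified Lean document; each statement's English description precedes it below -/
import Mathlib

section
/- Let G be a finite graph, let N be a nested proper separation system of G, and let (T,𝒱) be a tree-decomposition of G such that the map assigning to each oriented edge of T the separation it induces is a bijection onto N. Then an orientation O of N equals O(t) for some node t of T if and only if O is consistent. -/
open SimpleGraph Set

namespace CanonicalTD

variable {V : Type*} {ι : Type*}

/-- `p = (A,B)` is a separation of `G`: `A ∪ B = V` and no edge between `A∖B` and `B∖A`. -/
def IsSep (G : SimpleGraph V) (p : Set V × Set V) : Prop :=
  p.1 ∪ p.2 = univ ∧ ∀ a ∈ p.1 \ p.2, ∀ b ∈ p.2 \ p.1, ¬G.Adj a b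

/-- The order `|A ∩ B|` of a separation `(A,B)`. -/
noncomputable def sepOrder (p : Set V × Set V) : ℕ := (p.1 ∩ p.2).ncard

/-- A separation is proper if both `A∖B` and `B∖A` are nonempty. -/
def ProperSep (p : Set V × Set V) : Prop := (p.1 \ p.2).Nonempty ∧ (p.2 \ p.1).Nonempty

/-- The partial order on separations: `(A,B) ≤ (C,D)` iff `A ⊆ C` and `D ⊆ B`. -/
def SepLE (p q : Set V × Set V) : Prop := p.1 ⊆ q.1 ∧ q.2 ⊆ p.2

/-- Two separations are nested if they become comparable after possibly inverting. -/
def Nested (p q : Set V × Set V) : Prop :=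
  SepLE p q ∨ SepLE q p ∨ SepLE p q.swap ∨ SepLE q.swap p

/-- A separation `(A,B)` is tight if every vertex of `A ∩ B` has a neighbour in `A∖B`
and a neighbour in `B∖A`. -/
def TightSep (G : SimpleGraph V) (p : Set V × Set V) : Prop :=
  ∀ v ∈ p.1 ∩ p.2, (∃ a ∈ p.1 \ p.2, G.Adj v a) ∧ ∃ b ∈ p.2 \ p.1, G.Adj v b

/-- `S_k`: the set of all proper separations of `G` of order `< k`. -/
def Sk (G : SimpleGraph V) (k : ℕ) : Set (Set V × Set V) :=
  {p | IsSep G p ∧ ProperSep p ∧ sepOrder p < k}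

/-- A separation system of `G`: a set of separations closed under inverses. -/
def IsSepSystem (G : SimpleGraph V) (N : Set (Set V × Set V)) : Prop :=
  (∀ p ∈ N, IsSep G p) ∧ ∀ p ∈ N, p.swap ∈ N

def NestedSystem (N : Set (Set V × Set V)) : Prop :=
  ∀ p ∈ N, ∀ q ∈ N, Nested p q

def ProperSystem (N : Set (Set V × Set V)) : Prop := ∀ p ∈ N, ProperSep p

/-- An orientation of `N`: contains exactly one of `(A,B)`, `(B,A)` for each `(A,B) ∈ N`. -/
def IsOrientation (N O : Set (Set V × Set V)) : Prop :=
  O ⊆ N ∧ ∀ p ∈ N, (p ∈ O ↔ p.swap ∉ O)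

/-- Consistency: no distinct `(A,B),(C,D) ∈ O` with `(D,C) ≤ (A,B)`. -/
def Consistent (O : Set (Set V × Set V)) : Prop :=
  ∀ p ∈ O, ∀ q ∈ O, p ≠ q → ¬SepLE q.swap p

/-- A `k`-profile of `G`. -/
def IsProfile (G : SimpleGraph V) (k : ℕ) (P : Set (Set V × Set V)) : Prop :=
  IsOrientation (Sk G k) P ∧ Consistent P ∧
    ∀ p ∈ P, ∀ q ∈ P, (p.2 ∩ q.2, p.1 ∪ q.1) ∉ P

/-- `(T, Vt)` is a tree-decomposition of `G`. -/
def IsTreeDecomp (G : SimpleGraph V) (T : SimpleGraph ι) (Vt : ι → Set V) : Prop :=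
  T.IsTree ∧ (⋃ t, Vt t) = univ ∧
  (∀ u v, G.Adj u v → ∃ t, u ∈ Vt t ∧ v ∈ Vt t) ∧
  ∀ (t1 t3 : ι) (w : T.Walk t1 t3), w.IsPath →
    ∀ t2 ∈ w.support, Vt t1 ∩ Vt t3 ⊆ Vt t2

/-- The vertex set of the component of `T - t1t2` containing `t1`. -/
def side (T : SimpleGraph ι) (t1 t2 : ι) : Set ι :=
  {s | (T.deleteEdges {s(t1, t2)}).Reachable t1 s}

/-- The separation induced by the oriented edge `(t1, t2)` of `T`. -/
def inducedSep (T : SimpleGraph ι) (Vt : ι → Set V) (t1 t2 : ι) : Set V × Set V :=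
  (⋃ s ∈ side T t1 t2, Vt s, ⋃ s ∈ side T t2 t1, Vt s)

/-- The set of separations induced by oriented edges of `T`. -/
def inducedSeps (T : SimpleGraph ι) (Vt : ι → Set V) : Set (Set V × Set V) :=
  {p | ∃ t1 t2, T.Adj t1 t2 ∧ p = inducedSep T Vt t1 t2}

/-- `O(t)`: separations induced by oriented edges `(t1,t2)` with `t` in the component of `t2`. -/
def Otow (T : SimpleGraph ι) (Vt : ι → Set V) (t : ι) : Set (Set V × Set V) :=
  {p | ∃ t1 t2, T.Adj t1 t2 ∧ t ∈ side T t2 t1 ∧ p = inducedSep T Vt t1 t2}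

/-- The map assigning to each oriented edge of `T` its induced separation is a bijection
onto `N`. -/
def EdgeSepBij (T : SimpleGraph ι) (Vt : ι → Set V) (N : Set (Set V × Set V)) : Prop :=
  (∀ t1 t2, T.Adj t1 t2 → inducedSep T Vt t1 t2 ∈ N) ∧
  ∀ p ∈ N, ∃! e : ι × ι, T.Adj e.1 e.2 ∧ inducedSep T Vt e.1 e.2 = p

/-- The tree-decomposition has adhesion `< k`. -/
def AdhesionLt (T : SimpleGraph ι) (Vt : ι → Set V) (k : ℕ) : Prop :=
  ∀ t1 t2, T.Adj t1 t2 → (Vt t1 ∩ Vt t2).ncard < k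

/-- The tree-decomposition is canonical: the automorphism group of `G` acts on `T`
compatibly with the parts. -/
def Canonical (G : SimpleGraph V) (T : SimpleGraph ι) (Vt : ι → Set V) : Prop :=
  ∃ ρ : (G ≃g G) → (T ≃g T),
    (∀ φ ψ : G ≃g G, ρ (φ.trans ψ) = (ρ φ).trans (ρ ψ)) ∧
    ∀ (φ : G ≃g G) (t : ι), (⇑φ) '' Vt t = Vt (ρ φ t)

/-- `X` is `(<k)`-inseparable in `G`. -/
def Inseparable' (G : SimpleGraph V) (k : ℕ) (X : Set V) : Prop :=
  ∀ p : Set V × Set V, IsSep G p → sepOrder p < k → X ⊆ p.1 ∨ X ⊆ p.2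

/-- `X` is a `k`-block of `G`: a maximal `(<k)`-inseparable set of at least `k` vertices. -/
def IsBlock (G : SimpleGraph V) (k : ℕ) (X : Set V) : Prop :=
  k ≤ X.ncard ∧ Inseparable' G k X ∧
    ∀ Y, Inseparable' G k Y → X ⊆ Y → Y = X

/-- The `k`-profile `P_k(X)` induced by a `k`-block `X`. -/
def blockProfile (G : SimpleGraph V) (k : ℕ) (X : Set V) : Set (Set V × Set V) :=
  {p | p ∈ Sk G k ∧ X ⊆ p.2 ∧ ¬X ⊆ p.1}

/-- `p` is a `≤`-maximal element of `M`. -/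
def MaxIn (M : Set (Set V × Set V)) (p : Set V × Set V) : Prop :=
  p ∈ M ∧ ∀ q ∈ M, SepLE p q → q = p

/-- The `k`-block `X` is well separated in `S`: the maximal elements of `P_k(X) ∩ S`
are pairwise nested. -/
def WellSepIn (G : SimpleGraph V) (k : ℕ) (X : Set V) (S : Set (Set V × Set V)) : Prop :=
  ∀ p q, MaxIn (blockProfile G k X ∩ S) p → MaxIn (blockProfile G k X ∩ S) q → Nested p q

/-- `D` is the vertex set of a component of `G - X`. -/
def IsCompOf (G : SimpleGraph V) (X D : Set V) : Prop :=
  D ⊆ Xᶜ ∧ (G.induce D).Connected ∧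
    ∀ D', D ⊆ D' → D' ⊆ Xᶜ → (G.induce D').Connected → D' = D

/-- `S(X)`: the set of tight separations `(A,B)` with `X ⊆ B` and `A∖B` the vertex set of
a component of `G - X`. -/
def SX (G : SimpleGraph V) (X : Set V) : Set (Set V × Set V) :=
  {p | IsSep G p ∧ TightSep G p ∧ X ⊆ p.2 ∧ IsCompOf G X (p.1 \ p.2)}

/-- `G` is `m`-connected. -/
def IsKConnected (G : SimpleGraph V) [Fintype V] (m : ℕ) : Prop :=
  m < Fintype.card V ∧ ∀ U : Set V, U.ncard < m → (G.induce Uᶜ).Connected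

/-- The tree-decomposition distinguishes the set `Profs` of profiles. -/
def DistinguishesProfiles (T : SimpleGraph ι) (Vt : ι → Set V)
    (Profs : Set (Set (Set V × Set V))) : Prop :=
  ∀ P ∈ Profs, ∀ P' ∈ Profs, P ≠ P' → ∃ p ∈ inducedSeps T Vt, p ∈ P ∧ p.swap ∈ P'

/-- The tree-decomposition distinguishes every two distinct `k`-blocks efficiently. -/
def DistinguishesBlocksEff (G : SimpleGraph V) (k : ℕ) (T : SimpleGraph ι)
    (Vt : ι → Set V) : Prop :=
  ∀ X X', IsBlock G k X → IsBlock G k X' → X ≠ X' →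
    ∃ p ∈ inducedSeps T Vt, X ⊆ p.1 ∧ X' ⊆ p.2 ∧
      ∀ q : Set V × Set V, IsSep G q → X ⊆ q.1 → X' ⊆ q.2 → sepOrder p ≤ sepOrder q

section TreeLemmas

variable {T : SimpleGraph ι}

lemma del_comm (T : SimpleGraph ι) (a b : ι) :
    T.deleteEdges {s(b, a)} = T.deleteEdges {s(a, b)} := by rw [Sym2.eq_swap]

lemma mem_side_self (T : SimpleGraph ι) (a b : ι) : a ∈ side T a b := Reachable.refl a

lemma side_not_both (hT : T.IsAcyclic) {a b : ι} (hab : T.Adj a b) {x : ι}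
    (h1 : x ∈ side T a b) (h2 : x ∈ side T b a) : False := by
  have hbr : T.IsBridge s(a, b) :=
    isAcyclic_iff_forall_edge_isBridge.mp hT (T.mem_edgeSet.mpr hab)
  rw [isBridge_iff] at hbr
  have h2' : (T.deleteEdges {s(a, b)}).Reachable b x := del_comm T a b ▸ h2
  exact hbr ((h1 : (T.deleteEdges {s(a, b)}).Reachable a x).trans h2'.symm)

lemma adj_mem_side {a b x y : ι} (hxy : T.Adj x y) (hne : s(x, y) ≠ s(a, b))
    (hx : x ∈ side T a b) : y ∈ side T a b := by
  refine Reachable.trans hx (Adj.reachable ?_)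
  rw [deleteEdges_adj]
  exact ⟨hxy, by simpa using hne⟩

lemma walk_prop {P : ι → Prop} (hstep : ∀ u v, T.Adj u v → P u → P v)
    {u x : ι} (w : T.Walk u x) : P u → P x := by
  induction w with
  | nil => exact id
  | cons huv q ih => exact fun h => ih (hstep _ _ huv h)

lemma side_cover (hT : T.Connected) {a b : ι} (hab : T.Adj a b) (x : ι) :
    x ∈ side T a b ∨ x ∈ side T b a := by
  have step : ∀ u v, T.Adj u v →
      (u ∈ side T a b ∨ u ∈ side T b a) → v ∈ side T a b ∨ v ∈ side T b a := by
    intro u v huv h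
    by_cases hne : s(u, v) = s(a, b)
    · rw [Sym2.eq_iff] at hne
      rcases hne with ⟨rfl, rfl⟩ | ⟨rfl, rfl⟩
      · exact Or.inr (mem_side_self T v u)
      · exact Or.inl (mem_side_self T v u)
    · rcases h with h | h
      · exact Or.inl (adj_mem_side huv hne h)
      · exact Or.inr (adj_mem_side huv (fun hcon => hne (hcon.trans Sym2.eq_swap.symm)) h)
  obtain ⟨w⟩ := hT.preconnected a x
  exact walk_prop step w (Or.inl (mem_side_self T a b))

lemma side_subset {a b c d : ι} (hab : T.Adj a b) (hcd : T.Adj c d)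
    (hc : c ∉ side T a b) (hd : d ∉ side T a b)
    {x : ι} (hx1 : x ∈ side T a b) (hx2 : x ∈ side T d c) :
    side T a b ⊆ side T d c := by
  classical
  have key : ∀ y ∈ side T a b, (T.deleteEdges {s(c, d)}).Reachable a y := by
    intro y hy
    obtain ⟨w⟩ := (hy : (T.deleteEdges {s(a, b)}).Reachable a y)
    refine ⟨w.transfer _ ?_⟩
    intro e he
    induction e using Sym2.ind with
    | _ u v =>
      have huv : (T.deleteEdges {s(a, b)}).Adj u v :=
        (T.deleteEdges {s(a, b)}).mem_edgeSet.mp (w.edges_subset_edgeSet he)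
      have hu : u ∈ side T a b := ⟨w.takeUntil u (w.fst_mem_support_of_mem_edges he)⟩
      have hv : v ∈ side T a b := ⟨w.takeUntil v (w.snd_mem_support_of_mem_edges he)⟩
      rw [mem_edgeSet, deleteEdges_adj]
      refine ⟨(deleteEdges_adj.mp huv).1, ?_⟩
      simp only [Set.mem_singleton_iff, Sym2.eq_iff]
      rintro (⟨rfl, rfl⟩ | ⟨rfl, rfl⟩)
      · exact hc hu
      · exact hd hu
  intro y hy
  have h1 := key y hy
  have h2 := key x hx1
  have h3 : (T.deleteEdges {s(c, d)}).Reachable d x :=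
    del_comm T c d ▸ (hx2 : (T.deleteEdges {s(d, c)}).Reachable d x)
  show (T.deleteEdges {s(d, c)}).Reachable d y
  rw [del_comm T c d]
  exact h3.trans (h2.symm.trans h1)

lemma sep_vt_subset (G : SimpleGraph V) (Vt : ι → Set V)
    (htd : IsTreeDecomp G T Vt) {a b : ι} (hab : T.Adj a b)
    {u w : ι} (hu : u ∈ side T a b) (hw : w ∈ side T b a) :
    Vt u ∩ Vt w ⊆ Vt a := by
  classical
  obtain ⟨w1⟩ := (hu : (T.deleteEdges {s(a, b)}).Reachable a u)
  obtain ⟨w2⟩ := (hw : (T.deleteEdges {s(b, a)}).Reachable b w)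
  have hp1 : w1.bypass.IsPath := w1.bypass_isPath
  have hp2 : w2.bypass.IsPath := w2.bypass_isPath
  have hs1 : ∀ z ∈ w1.bypass.support, z ∈ side T a b := fun z hz =>
    ⟨w1.takeUntil z (w1.support_bypass_subset hz)⟩
  have hs2 : ∀ z ∈ w2.bypass.support, z ∈ side T b a := fun z hz =>
    ⟨w2.takeUntil z (w2.support_bypass_subset hz)⟩
  have hedges1 : ∀ e ∈ w1.bypass.edges, e ∈ T.edgeSet := fun e he =>
    edgeSet_mono (T.deleteEdges_le _) (w1.bypass.edges_subset_edgeSet he)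
  have hedges2 : ∀ e ∈ w2.bypass.edges, e ∈ T.edgeSet := fun e he =>
    edgeSet_mono (T.deleteEdges_le _) (w2.bypass.edges_subset_edgeSet he)
  set q1 : T.Walk a u := w1.bypass.transfer T hedges1 with hq1def
  set q2 : T.Walk b w := w2.bypass.transfer T hedges2 with hq2def
  have hq1 : q1.IsPath := hp1.transfer hedges1
  have hq2 : q2.IsPath := hp2.transfer hedges2
  have hq1s : q1.support = w1.bypass.support := Walk.support_transfer _ _
  have hq2s : q2.support = w2.bypass.support := Walk.support_transfer _ _
  set W : T.Walk u w := q1.reverse.append (Walk.cons hab q2) with hWdef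
  have hWsupp : W.support = q1.reverse.support ++ q2.support := by
    rw [hWdef, Walk.support_append, Walk.support_cons]
    simp
  have hW : W.IsPath := by
    rw [Walk.isPath_def, hWsupp]
    refine List.Nodup.append ?_ ?_ ?_
    · exact (Walk.isPath_def _).mp hq1.reverse
    · exact (Walk.isPath_def _).mp hq2
    · intro z hz1 hz2
      rw [Walk.support_reverse, List.mem_reverse, hq1s] at hz1
      rw [hq2s] at hz2
      exact side_not_both htd.1.2 hab (hs1 z hz1) (hs2 z hz2)
  have haW : a ∈ W.support := by
    rw [hWsupp]
    exact List.mem_append_left _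
      (by rw [Walk.support_reverse, List.mem_reverse]; exact q1.start_mem_support)
  exact htd.2.2.2 u w W hW a haW

lemma sep_union_mono (Vt : ι → Set V) {s t : Set ι} (h : s ⊆ t) :
    ⋃ z ∈ s, Vt z ⊆ ⋃ z ∈ t, Vt z := fun v hv => by
  obtain ⟨z, hz, hvz⟩ := Set.mem_iUnion₂.mp hv
  exact Set.mem_biUnion (h hz) hvz

lemma subset_sep_fst (Vt : ι → Set V) {a b z : ι} (hz : z ∈ side T a b) :
    Vt z ⊆ (inducedSep T Vt a b).1 := fun v hv => Set.mem_biUnion hz hv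

end TreeLemmas

/-- Theorem 1.1(i): the orientations of `N` induced by nodes of `T` are precisely the
consistent orientations of `N`. -/
theorem stmt_0 {V : Type*} [Fintype V] (G : SimpleGraph V)
    {ι : Type*} [Fintype ι] (T : SimpleGraph ι) (Vt : ι → Set V)
    (N : Set (Set V × Set V))
    (hsys : IsSepSystem G N) (hnested : NestedSystem N) (hproper : ProperSystem N)
    (htd : IsTreeDecomp G T Vt) (hbij : EdgeSepBij T Vt N)
    (O : Set (Set V × Set V)) (hO : IsOrientation N O) :
    (∃ t : ι, O = Otow T Vt t) ↔ Consistent O := by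
  have hconn : T.Connected := htd.1.1
  have hacyc : T.IsAcyclic := htd.1.2
  constructor
  · rintro ⟨t, rfl⟩
    intro p hp q hq hne hle
    obtain ⟨t1, t2, he, ht, rfl⟩ := hp
    obtain ⟨s1, s2, hf, hs, rfl⟩ := hq
    have hpO : inducedSep T Vt t1 t2 ∈ Otow T Vt t := ⟨t1, t2, he, ht, rfl⟩
    have hqO : inducedSep T Vt s1 s2 ∈ Otow T Vt t := ⟨s1, s2, hf, hs, rfl⟩
    have hpN : inducedSep T Vt t1 t2 ∈ N := hO.1 hpO
    have hqN : inducedSep T Vt s1 s2 ∈ N := hO.1 hqO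
    have hle1 : (inducedSep T Vt s1 s2).2 ⊆ (inducedSep T Vt t1 t2).1 := hle.1
    have hle2 : (inducedSep T Vt t1 t2).2 ⊆ (inducedSep T Vt s1 s2).1 := hle.2
    have hedge_ne : s(s1, s2) ≠ s(t1, t2) := by
      intro hEq
      rw [Sym2.eq_iff] at hEq
      rcases hEq with ⟨rfl, rfl⟩ | ⟨rfl, rfl⟩
      · exact hne rfl
      · exact side_not_both hacyc he hs ht
    by_cases hs1 : s1 ∈ side T t1 t2
    · -- Case A
      have hs2 : s2 ∈ side T t1 t2 := adj_mem_side hf hedge_ne hs1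
      have hsub : side T t2 t1 ⊆ side T s2 s1 :=
        side_subset he.symm hf (fun h => side_not_both hacyc he hs1 h)
          (fun h => side_not_both hacyc he hs2 h) ht hs
      obtain ⟨v, hv2, hv1⟩ := (hproper _ hpN).2
      have hvq1 : v ∈ (inducedSep T Vt s1 s2).1 := hle2 hv2
      have hvq2 : v ∈ (inducedSep T Vt s1 s2).2 := sep_union_mono Vt hsub hv2
      obtain ⟨zu, hzu, hvzu⟩ := Set.mem_iUnion₂.mp hvq1
      obtain ⟨zw, hzw, hvzw⟩ := Set.mem_iUnion₂.mp hvq2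
      have hvs1 : v ∈ Vt s1 := sep_vt_subset G Vt htd hf hzu hzw ⟨hvzu, hvzw⟩
      exact hv1 (subset_sep_fst Vt hs1 hvs1)
    · have hs1' : s1 ∈ side T t2 t1 := (side_cover hconn he s1).resolve_left hs1
      have hs2' : s2 ∈ side T t2 t1 :=
        adj_mem_side hf (fun hcon => hedge_ne (hcon.trans Sym2.eq_swap)) hs1'
      by_cases ht1 : t1 ∈ side T s1 s2
      · -- B1
        have ht2 : t2 ∈ side T s1 s2 := adj_mem_side he (Ne.symm hedge_ne) ht1
        have hsub : side T s2 s1 ⊆ side T t2 t1 :=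
          side_subset hf.symm he (fun h => side_not_both hacyc hf ht1 h)
            (fun h => side_not_both hacyc hf ht2 h) hs ht
        obtain ⟨v, hv2, hv1⟩ := (hproper _ hqN).2
        have hvp1 : v ∈ (inducedSep T Vt t1 t2).1 := hle1 hv2
        have hvp2 : v ∈ (inducedSep T Vt t1 t2).2 := sep_union_mono Vt hsub hv2
        obtain ⟨zu, hzu, hvzu⟩ := Set.mem_iUnion₂.mp hvp1
        obtain ⟨zw, hzw, hvzw⟩ := Set.mem_iUnion₂.mp hvp2
        have hvt1 : v ∈ Vt t1 := sep_vt_subset G Vt htd he hzu hzw ⟨hvzu, hvzw⟩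
        exact hv1 (subset_sep_fst Vt ht1 hvt1)
      · -- B2
        have ht1' : t1 ∈ side T s2 s1 := (side_cover hconn hf t1).resolve_left ht1
        have ht2' : t2 ∈ side T s2 s1 :=
          adj_mem_side he (fun hcon => hedge_ne (Sym2.eq_swap.trans hcon.symm)) ht1'
        have hsubp : side T t1 t2 ⊆ side T s2 s1 :=
          side_subset he hf (fun h => side_not_both hacyc he h hs1')
            (fun h => side_not_both hacyc he h hs2') (mem_side_self T t1 t2) ht1'
        have hsubq : side T s1 s2 ⊆ side T t2 t1 :=
          side_subset hf he (fun h => side_not_both hacyc hf h ht1')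
            (fun h => side_not_both hacyc hf h ht2') (mem_side_self T s1 s2) hs1'
        have hq_eq : inducedSep T Vt s1 s2 = (inducedSep T Vt t1 t2).swap := by
          refine Prod.ext_iff.mpr ⟨?_, ?_⟩
          · exact Subset.antisymm (sep_union_mono Vt hsubq) hle2
          · exact Subset.antisymm hle1 (sep_union_mono Vt hsubp)
        rw [hq_eq] at hqO
        exact (hO.2 _ hpN).mp hpO hqO
  · intro hcons
    classical
    obtain ⟨t, -, hmax⟩ := Finset.exists_max_image Finset.univ
      (fun t : ι => (Finset.univ.filter (fun e : ι × ι =>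
        T.Adj e.1 e.2 ∧ inducedSep T Vt e.1 e.2 ∈ O ∧ t ∈ side T e.2 e.1)).card)
      ⟨(hconn.nonempty).some, Finset.mem_univ _⟩
    have claim : ∀ a b, T.Adj a b → inducedSep T Vt a b ∈ O → t ∈ side T a b →
        ∀ s1 s2, T.Adj s1 s2 → inducedSep T Vt s1 s2 ∈ O → t ∈ side T s2 s1 →
        b ∈ side T s2 s1 := by
      intro a b hab hpO ht' s1 s2 hf hqO hts
      by_contra hb'
      have hb : b ∈ side T s1 s2 := (side_cover hconn hf b).resolve_right hb'
      have hedge_ne : s(s1, s2) ≠ s(a, b) := by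
        intro hEq
        rw [Sym2.eq_iff] at hEq
        rcases hEq with ⟨rfl, rfl⟩ | ⟨rfl, rfl⟩
        · exact side_not_both hacyc hab ht' hts
        · exact (hO.2 _ (hO.1 hpO)).mp hpO hqO
      have ha : a ∈ side T s1 s2 :=
        adj_mem_side hab.symm (fun hcon => hedge_ne (hcon.symm.trans Sym2.eq_swap)) hb
      by_cases hc1 : s1 ∈ side T a b
      · have hc2 : s2 ∈ side T a b := adj_mem_side hf hedge_ne hc1
        have hsub : side T b a ⊆ side T s1 s2 :=
          side_subset hab.symm hf.symm (fun h => side_not_both hacyc hab hc2 h)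
            (fun h => side_not_both hacyc hab hc1 h) (mem_side_self T b a) hb
        have hne_pq : inducedSep T Vt a b ≠ inducedSep T Vt s1 s2 := by
          intro hEq
          obtain ⟨e, -, huniq⟩ := hbij.2 _ (hO.1 hpO)
          have h1 := huniq (a, b) ⟨hab, rfl⟩
          have h2 := huniq (s1, s2) ⟨hf, hEq.symm⟩
          have h3 : (s1, s2) = (a, b) := h2.trans h1.symm
          injection h3 with h4 h5
          subst h4; subst h5
          exact side_not_both hacyc hab ht' hts
        have hSep : SepLE (inducedSep T Vt s1 s2).swap (inducedSep T Vt a b) := by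
          constructor
          · exact sep_union_mono Vt (fun z hz => (side_cover hconn hab z).resolve_right
              (fun hz2 => side_not_both hacyc hf (hsub hz2) hz))
          · exact sep_union_mono Vt hsub
        exact hcons _ hpO _ hqO hne_pq hSep
      · have hc1' : s1 ∈ side T b a := (side_cover hconn hab s1).resolve_left hc1
        have hc2' : s2 ∈ side T b a :=
          adj_mem_side hf (fun hcon => hedge_ne (hcon.trans Sym2.eq_swap)) hc1'
        have hsub : side T a b ⊆ side T s2 s1 :=
          side_subset hab hf (fun h => side_not_both hacyc hab h hc1')
            (fun h => side_not_both hacyc hab h hc2') ht' hts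
        exact side_not_both hacyc hf ha (hsub (mem_side_self T a b))
    have sink : ∀ p ∈ O, ∀ a b, T.Adj a b → inducedSep T Vt a b = p → t ∈ side T b a := by
      intro p hp a b hab hsep
      by_contra ht'
      have ht'' : t ∈ side T a b := (side_cover hconn hab t).resolve_right ht'
      subst hsep
      have hsubF : (Finset.univ.filter (fun e : ι × ι =>
            T.Adj e.1 e.2 ∧ inducedSep T Vt e.1 e.2 ∈ O ∧ t ∈ side T e.2 e.1)) ⊆
          (Finset.univ.filter (fun e : ι × ι =>
            T.Adj e.1 e.2 ∧ inducedSep T Vt e.1 e.2 ∈ O ∧ b ∈ side T e.2 e.1)) := by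
        intro e heF
        rw [Finset.mem_filter] at heF ⊢
        obtain ⟨hu, hadj, hmem, hside⟩ := heF
        exact ⟨hu, hadj, hmem, claim a b hab hp ht'' e.1 e.2 hadj hmem hside⟩
      have hmemb : (a, b) ∈ (Finset.univ.filter (fun e : ι × ι =>
            T.Adj e.1 e.2 ∧ inducedSep T Vt e.1 e.2 ∈ O ∧ b ∈ side T e.2 e.1)) := by
        rw [Finset.mem_filter]
        exact ⟨Finset.mem_univ _, hab, hp, mem_side_self T b a⟩
      have hnotmem : (a, b) ∉ (Finset.univ.filter (fun e : ι × ι =>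
            T.Adj e.1 e.2 ∧ inducedSep T Vt e.1 e.2 ∈ O ∧ t ∈ side T e.2 e.1)) := by
        rw [Finset.mem_filter]
        rintro ⟨-, -, -, hside⟩
        exact side_not_both hacyc hab ht'' hside
      have hlt := Finset.card_lt_card
        ((Finset.ssubset_iff_of_subset hsubF).mpr ⟨(a, b), hmemb, hnotmem⟩)
      have hle' := hmax b (Finset.mem_univ b)
      omega
    refine ⟨t, ?_⟩
    ext q
    constructor
    · intro hq
      obtain ⟨e, ⟨hadj, hsep⟩, -⟩ := hbij.2 q (hO.1 hq)
      exact ⟨e.1, e.2, hadj, sink q hq e.1 e.2 hadj hsep, hsep.symm⟩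
    · rintro ⟨s1, s2, hf, hts, rfl⟩
      by_contra hq
      have hswap : (inducedSep T Vt s1 s2).swap ∈ O := by
        by_contra h2
        exact hq ((hO.2 _ (hbij.1 s1 s2 hf)).mpr h2)
      have hts' : t ∈ side T s1 s2 := sink _ hswap s2 s1 hf.symm rfl
      exact side_not_both hacyc hf hts' hts

end CanonicalTD
end

section
/- Let G be a finite graph, let N be a nested proper separation system of G, and let (T,𝒱) be a tree-decomposition of G such that the map assigning to each oriented edge of T the separation it induces is a bijection onto N. Then distinct nodes t ≠ t' of T induce distinct orientations of N, i.e., O(t) ≠ O(t'). -/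
open SimpleGraph Set

namespace CanonicalTD

variable {V : Type*} {ι : Type*}

lemma side_disjoint {T : SimpleGraph ι} (hT : T.IsAcyclic) {a b t : ι}
    (hab : T.Adj a b) (h1 : t ∈ side T a b) (h2 : t ∈ side T b a) : False := by
  have hbr := (isAcyclic_iff_forall_adj_isBridge.mp hT) hab
  rw [isBridge_iff] at hbr
  have h2' : (T.deleteEdges {s(a, b)}).Reachable b t := by
    rwa [side, Sym2.eq_swap] at h2
  exact hbr (h1.trans h2'.symm)

lemma exists_split {T : SimpleGraph ι} (hT : T.IsTree) {t t' : ι} (htt' : t ≠ t') :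
    ∃ a b, T.Adj a b ∧ t ∈ side T a b ∧ t' ∈ side T b a := by
  haveI := Classical.decEq ι
  obtain ⟨w⟩ := hT.isConnected.preconnected t t'
  have hpath : (w.toPath : T.Walk t t').IsPath := w.toPath.2
  cases hq : (w.toPath : T.Walk t t') with
  | nil => exact absurd rfl htt'
  | @cons _ s _ h q =>
    refine ⟨t, s, h, Reachable.refl _, ?_⟩
    rw [hq] at hpath
    have htq : t ∉ q.support := by
      have := hpath.support_nodup
      simp at this
      exact this.1
    refine ⟨q.transfer _ ?_⟩
    intro e he
    rw [edgeSet_deleteEdges]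
    refine ⟨q.edges_subset_edgeSet he, ?_⟩
    simp only [Set.mem_singleton_iff]
    rintro rfl
    exact htq (q.fst_mem_support_of_mem_edges (by rwa [Sym2.eq_swap] at he))

/-- Distinct nodes of `T` induce distinct orientations of `N`. -/
theorem stmt_2 {V : Type*} [Fintype V] (G : SimpleGraph V)
    {ι : Type*} [Fintype ι] (T : SimpleGraph ι) (Vt : ι → Set V)
    (N : Set (Set V × Set V))
    (hsys : IsSepSystem G N) (hnested : NestedSystem N) (hproper : ProperSystem N)
    (htd : IsTreeDecomp G T Vt) (hbij : EdgeSepBij T Vt N) :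
    ∀ t t' : ι, t ≠ t' → Otow T Vt t ≠ Otow T Vt t' := by
  intro t t' htt' hEq
  obtain ⟨a, b, hab, hta, ht'b⟩ := exists_split htd.1 htt'
  have hmem : inducedSep T Vt a b ∈ Otow T Vt t' := ⟨a, b, hab, ht'b, rfl⟩
  rw [← hEq] at hmem
  obtain ⟨t1, t2, h12, ht2, heq⟩ := hmem
  have hpN : inducedSep T Vt a b ∈ N := hbij.1 a b hab
  obtain ⟨e, -, hu⟩ := hbij.2 _ hpN
  have h1 : ((t1, t2) : ι × ι) = e := hu (t1, t2) ⟨h12, heq.symm⟩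
  have h2 : ((a, b) : ι × ι) = e := hu (a, b) ⟨hab, rfl⟩
  rw [← h2] at h1
  obtain ⟨rfl, rfl⟩ : t1 = a ∧ t2 = b := Prod.ext_iff.mp h1
  exact side_disjoint htd.1.IsAcyclic hab hta ht2

end CanonicalTD
end

section
/- Let G be a finite graph, k ∈ ℕ, let N ⊆ S_k be a nested proper separation system of G, and let (T,𝒱) be a tree-decomposition of G such that the map assigning to each oriented edge of T the separation it induces is a bijection onto N. Then every k-profile P of G inhabits exactly one node of T: there is a unique node t of T with P ∩ N = O(t). -/
open SimpleGraph Set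

namespace CanonicalTD

variable {V : Type*} {ι : Type*}

section Helpers

variable {T : SimpleGraph ι}

lemma side_refl (T : SimpleGraph ι) (t1 t2 : ι) : t1 ∈ side T t1 t2 := Reachable.refl _

lemma bridge_not_reach (hT : T.IsAcyclic) {t1 t2 : ι} (h : T.Adj t1 t2) :
    ¬ (T.deleteEdges {s(t1, t2)}).Reachable t1 t2 :=
  (isBridge_iff.mp (isAcyclic_iff_forall_edge_isBridge.mp hT (T.mem_edgeSet.mpr h)))

lemma not_mem_side (hT : T.IsAcyclic) {t1 t2 : ι} (h : T.Adj t1 t2) :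
    t2 ∉ side T t1 t2 := bridge_not_reach hT h

lemma side_subset_s3 (hT : T.IsAcyclic) {a b c : ι} (hab : T.Adj a b) (hbc : T.Adj b c)
    (hac : a ≠ c) : side T a b ⊆ side T b c := by
  classical
  intro x hx
  obtain ⟨w0⟩ := hx
  set p : (T.deleteEdges {s(a, b)}).Walk a x := w0.toPath.1 with hp
  have hbsup : b ∉ p.support := by
    intro hb
    exact bridge_not_reach hT hab ⟨p.takeUntil b hb⟩
  have hedges : ∀ e ∈ p.edges, e ∈ (T.deleteEdges {s(b, c)}).edgeSet := by
    intro e he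
    have h1 : e ∈ (T.deleteEdges {s(a, b)}).edgeSet := p.edges_subset_edgeSet he
    rw [edgeSet_deleteEdges] at h1 ⊢
    refine ⟨h1.1, ?_⟩
    intro hmem
    rw [Set.mem_singleton_iff] at hmem
    subst hmem
    exact hbsup (p.fst_mem_support_of_mem_edges he)
  have h2 : (T.deleteEdges {s(b, c)}).Reachable a x := ⟨p.transfer _ hedges⟩
  have h3 : (T.deleteEdges {s(b, c)}).Adj b a := by
    refine deleteEdges_adj.mpr ⟨hab.symm, ?_⟩
    rw [Set.mem_singleton_iff, Sym2.eq_iff]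
    rintro (⟨-, rfl⟩ | ⟨rfl, rfl⟩)
    · exact hac rfl
    · exact hbc.ne rfl
  exact h3.reachable.trans h2

lemma mem_side_union (hconn : T.Preconnected) {a b : ι} (hab : T.Adj a b) (x : ι) :
    x ∈ side T a b ∨ x ∈ side T b a := by
  have step : ∀ u v : ι, T.Adj u v → (u ∈ side T a b ∨ u ∈ side T b a) →
      (v ∈ side T a b ∨ v ∈ side T b a) := by
    intro u v huv hu
    by_cases he : s(u, v) = s(a, b)
    · rw [Sym2.eq_iff] at he
      rcases he with ⟨rfl, rfl⟩ | ⟨rfl, rfl⟩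
      · right; exact side_refl T _ _
      · left; exact side_refl T _ _
    · have hne1 : s(u, v) ∉ ({s(a, b)} : Set (Sym2 ι)) := by simpa using he
      have hne2 : s(u, v) ∉ ({s(b, a)} : Set (Sym2 ι)) := by
        rw [Set.mem_singleton_iff, Sym2.eq_swap (a := b)]; simpa using he
      have h1 : (T.deleteEdges {s(a, b)}).Adj u v := deleteEdges_adj.mpr ⟨huv, hne1⟩
      have h2 : (T.deleteEdges {s(b, a)}).Adj u v := deleteEdges_adj.mpr ⟨huv, hne2⟩
      rcases hu with h | h
      · exact Or.inl (h.trans h1.reachable)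
      · exact Or.inr (h.trans h2.reachable)
  have main : ∀ (u y : ι), T.Walk u y → (u ∈ side T a b ∨ u ∈ side T b a) →
      (y ∈ side T a b ∨ y ∈ side T b a) := by
    intro u y w
    induction w with
    | nil => exact id
    | cons h p ih => exact fun hu => ih (step _ _ h hu)
  exact (hconn a x).elim fun w => main a x w (Or.inl (side_refl T a b))

end Helpers

/-- Every `k`-profile of `G` inhabits exactly one node of `T`. -/
theorem stmt_3 {V : Type*} [Fintype V] (G : SimpleGraph V) (k : ℕ)
    {ι : Type*} [Fintype ι] (T : SimpleGraph ι) (Vt : ι → Set V)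
    (N : Set (Set V × Set V)) (hNk : N ⊆ Sk G k)
    (hsys : IsSepSystem G N) (hnested : NestedSystem N) (hproper : ProperSystem N)
    (htd : IsTreeDecomp G T Vt) (hbij : EdgeSepBij T Vt N)
    (P : Set (Set V × Set V)) (hP : IsProfile G k P) :
    ∃! t : ι, P ∩ N = Otow T Vt t := by
  classical
  obtain ⟨htree, -, -, -⟩ := htd
  have hconn : T.Connected := htree.isConnected
  have hacyc : T.IsAcyclic := htree.IsAcyclic
  have hpre : T.Preconnected := hconn.preconnected
  have hswap : ∀ a b : ι, (inducedSep T Vt a b).swap = inducedSep T Vt b a := fun a b => rfl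
  have hmemN : ∀ {a b : ι}, T.Adj a b → inducedSep T Vt a b ∈ N := fun h => hbij.1 _ _ h
  have horient : ∀ {a b : ι}, T.Adj a b →
      (inducedSep T Vt a b ∈ P ↔ inducedSep T Vt b a ∉ P) := by
    intro a b h
    have := hP.1.2 _ (hNk (hmemN h))
    rwa [hswap] at this
  have notboth : ∀ {a b : ι}, T.Adj a b → inducedSep T Vt a b ∈ P →
      inducedSep T Vt b a ∈ P → False := fun h h1 h2 => (horient h).mp h1 h2
  have oneof : ∀ {a b : ι}, T.Adj a b →
      inducedSep T Vt a b ∈ P ∨ inducedSep T Vt b a ∈ P := by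
    intro a b h
    by_cases h1 : inducedSep T Vt a b ∈ P
    · exact Or.inl h1
    · exact Or.inr (not_not.mp fun h2 => h1 ((horient h).mpr h2))
  have hsepLE : ∀ {a b c : ι}, T.Adj a b → T.Adj b c → a ≠ c →
      SepLE (inducedSep T Vt a b) (inducedSep T Vt b c) := by
    intro a b c hab hbc hac
    constructor
    · exact Set.biUnion_mono (side_subset_s3 hacyc hab hbc hac) fun _ _ => Set.Subset.rfl
    · exact Set.biUnion_mono (side_subset_s3 hacyc hbc.symm hab.symm hac.symm)
        fun _ _ => Set.Subset.rfl
  have hdistinct : ∀ {b a c : ι}, T.Adj b a → T.Adj b c → a ≠ c →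
      inducedSep T Vt b a ≠ inducedSep T Vt b c := by
    intro b a c hba hbc hac heq
    obtain ⟨e, -, hu⟩ := hbij.2 _ (hmemN hba)
    have h1 := hu (b, a) ⟨hba, rfl⟩
    have h2 := hu (b, c) ⟨hbc, heq.symm⟩
    rw [← h2] at h1
    exact hac (congrArg Prod.snd h1)
  have noout : ∀ {b a c : ι}, T.Adj b a → T.Adj b c → a ≠ c →
      inducedSep T Vt b a ∈ P → inducedSep T Vt b c ∈ P → False := by
    intro b a c hba hbc hac h1 h2
    refine hP.2.1 _ h1 _ h2 (hdistinct hba hbc hac) ?_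
    rw [hswap]
    exact hsepLE hbc.symm hba fun h => hac h.symm
  have key : ∀ t : ι, (∀ u, T.Adj t u → inducedSep T Vt t u ∉ P) →
      ∀ n a b, T.Adj a b → t ∈ side T b a → (side T b a).ncard ≤ n →
      inducedSep T Vt a b ∈ P := by
    intro t hsink n
    induction n with
    | zero =>
      intro a b hab ht hle
      have : 0 < (side T b a).ncard := (Set.ncard_pos (Set.toFinite _)).mpr ⟨t, ht⟩
      omega
    | succ n ih =>
      intro a b hab ht hle
      by_cases hbt : b = t
      · subst hbt
        rcases oneof hab with h | h
        · exact h
        · exact absurd h (hsink a hab.symm)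
      · obtain ⟨w0⟩ := ht
        obtain ⟨pw, hpath⟩ := w0.toPath
        cases pw with
        | nil => exact absurd rfl (Ne.symm hbt)
        | @cons _ c _ hadj q =>
          have hq := (Walk.cons_isPath_iff hadj q).mp hpath
          have hbc : T.Adj b c := (deleteEdges_adj.mp hadj).1
          have hca : c ≠ a := by
            intro hc
            apply (deleteEdges_adj.mp hadj).2
            rw [Set.mem_singleton_iff, hc]
          have htc : t ∈ side T c b := by
            refine ⟨q.transfer _ ?_⟩
            intro e he
            have h1 := q.edges_subset_edgeSet he
            rw [edgeSet_deleteEdges] at h1 ⊢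
            refine ⟨h1.1, ?_⟩
            intro hmem
            rw [Set.mem_singleton_iff] at hmem
            subst hmem
            exact hq.2 (q.snd_mem_support_of_mem_edges he)
          have hss : side T c b ⊂ side T b a := by
            refine ⟨side_subset_s3 hacyc hbc.symm hab.symm hca, fun hsub => ?_⟩
            exact not_mem_side hacyc hbc.symm (hsub (side_refl T b a))
          have hlt : (side T c b).ncard < (side T b a).ncard :=
            Set.ncard_lt_ncard hss (Set.toFinite _)
          have h2 : inducedSep T Vt b c ∈ P := ih b c hbc htc (by omega)
          rcases oneof hab with h | h
          · exact h
          · exact (noout hab.symm hbc (fun hx => hca hx.symm) h h2).elim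
  have hsinkE : ∃ t : ι, ∀ u, T.Adj t u → inducedSep T Vt t u ∉ P := by
    by_cases hE : ∃ a b : ι, T.Adj a b
    · obtain ⟨a0, b0, hab0⟩ := hE
      have desc : ∀ n (t u : ι), T.Adj t u → inducedSep T Vt t u ∈ P →
          (side T u t).ncard ≤ n → ∃ s : ι, ∀ w, T.Adj s w → inducedSep T Vt s w ∉ P := by
        intro n
        induction n with
        | zero =>
          intro t u hadj hmem hle
          have : 0 < (side T u t).ncard := (Set.ncard_pos (Set.toFinite _)).mpr ⟨u, side_refl T u t⟩
          omega
        | succ n ih =>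
          intro t u hadj hmem hle
          by_cases hs : ∀ w, T.Adj u w → inducedSep T Vt u w ∉ P
          · exact ⟨u, hs⟩
          · push_neg at hs
            obtain ⟨w, huw, hw⟩ := hs
            have hwt : w ≠ t := by
              rintro rfl
              exact notboth hadj hmem hw
            have hss : side T w u ⊂ side T u t := by
              refine ⟨side_subset_s3 hacyc huw.symm hadj.symm hwt, fun hsub => ?_⟩
              exact not_mem_side hacyc huw.symm (hsub (side_refl T u t))
            have hlt := Set.ncard_lt_ncard hss (Set.toFinite _)
            exact ih u w huw hw (by omega)
      rcases oneof hab0 with h | h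
      · exact desc _ a0 b0 hab0 h le_rfl
      · exact desc _ b0 a0 hab0.symm h le_rfl
    · push_neg at hE
      have hne : Nonempty ι := hconn.nonempty
      exact ⟨hne.some, fun u h => absurd h (hE _ _)⟩
  obtain ⟨t, hs⟩ := hsinkE
  have hOt : P ∩ N = Otow T Vt t := by
    ext p
    constructor
    · rintro ⟨hpP, hpN⟩
      obtain ⟨⟨t1, t2⟩, ⟨hadj, hpe⟩, -⟩ := hbij.2 p hpN
      rcases mem_side_union hpre hadj t with h | h
      · exfalso
        have h2 : inducedSep T Vt t2 t1 ∈ P := key t hs _ t2 t1 hadj.symm h le_rfl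
        rw [← hpe] at hpP
        exact notboth hadj hpP h2
      · exact ⟨t1, t2, hadj, h, hpe.symm⟩
    · rintro ⟨t1, t2, hadj, hts, rfl⟩
      exact ⟨key t hs _ t1 t2 hadj hts le_rfl, hbij.1 _ _ hadj⟩
  refine ⟨t, hOt, ?_⟩
  intro t' h'
  by_contra hne
  obtain ⟨w0⟩ := hpre t' t
  obtain ⟨pw, hpath⟩ := w0.toPath
  cases pw with
  | nil => exact hne rfl
  | @cons _ c _ hadj q =>
    have hq := (Walk.cons_isPath_iff hadj q).mp hpath
    have htc : t ∈ side T c t' := by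
      refine ⟨q.transfer _ ?_⟩
      intro e he
      rw [edgeSet_deleteEdges]
      refine ⟨q.edges_subset_edgeSet he, ?_⟩
      intro hmem
      rw [Set.mem_singleton_iff] at hmem
      subst hmem
      exact hq.2 (q.snd_mem_support_of_mem_edges he)
    have h1 : inducedSep T Vt t' c ∈ Otow T Vt t := ⟨t', c, hadj, htc, rfl⟩
    have h2 : inducedSep T Vt c t' ∈ Otow T Vt t' := ⟨c, t', hadj.symm, side_refl T t' c, rfl⟩
    rw [← hOt] at h1
    rw [← h'] at h2
    exact notboth hadj h1.1 h2.1

end CanonicalTD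
end

section
/- Let k ∈ ℕ and let G be a finite (k−1)-connected graph such that every pair x,y of adjacent vertices satisfies at least one of: (i) x and y have at least k−3 common neighbours; (ii) there are at least ⌊3(k−2)/2⌋ internally vertex-disjoint x–y paths in G each different from the edge xy; (iii) x and y lie together in some k-block of G. Then every k-block X of G is well separated in the set S_k of all proper separations of G of order < k. Indeed, for any two crossing separations (A,B),(C,D) ∈ P_k(X), the separation (A∪C, B∩D) has order < k (and hence lies in P_k(X)). -/
open SimpleGraph Set

namespace CanonicalTD

variable {V : Type*} {ι : Type*}

section Helpers

variable {G : SimpleGraph V}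

lemma mem_univ_or {A B : Set V} (hU : A ∪ B = univ) {v : V} (hv : v ∉ A) : v ∈ B := by
  have h2 : v ∈ A ∪ B := hU ▸ mem_univ v
  rcases (Set.mem_union _ _ _).mp h2 with h | h
  · exact absurd h hv
  · exact h

lemma walk_cross {A B : Set V} (hU : A ∪ B = univ)
    (hE : ∀ a ∈ A \ B, ∀ b ∈ B \ A, ¬G.Adj a b) {u v : V}
    (w : G.Walk u v) (hu : u ∈ A) (hv : v ∉ A) :
    ∃ s ∈ w.support, s ∈ A ∩ B := by
  revert hu hv
  induction w with
  | nil => exact fun hu hv => absurd hu hv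
  | @cons a b c h p ih =>
    intro hu hv
    by_cases hab : a ∈ B
    · exact ⟨a, Walk.start_mem_support _, ⟨hu, hab⟩⟩
    · have hb : b ∈ A := by
        by_contra hbA
        exact hE a ⟨hu, hab⟩ b ⟨mem_univ_or hU hbA, hbA⟩ h
      obtain ⟨s, hs, hs2⟩ := ih hb hv
      exact ⟨s, by simp [hs], hs2⟩

lemma induce_not_connected {U W : Set V} (hW : W.Nonempty)
    (hWU : ∀ w ∈ W, w ∉ U) (hout : ∃ v, v ∉ U ∧ v ∉ W)
    (hN : ∀ w ∈ W, ∀ v, G.Adj w v → v ∈ W ∪ U) :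
    ¬ (G.induce Uᶜ).Connected := by
  intro hc
  obtain ⟨w, hw⟩ := hW
  obtain ⟨v, hv1, hv2⟩ := hout
  have hr : (G.induce Uᶜ).Reachable ⟨w, hWU w hw⟩ ⟨v, hv1⟩ := hc.preconnected _ _
  obtain ⟨p⟩ := hr
  have key : ∀ (a b : (Uᶜ : Set V)) (q : (G.induce Uᶜ).Walk a b), (a : V) ∈ W → (b : V) ∈ W := by
    intro a b q
    induction q with
    | nil => exact id
    | @cons x y z h p ih =>
      intro hx
      have hadj : G.Adj (x : V) (y : V) := h
      have : (y : V) ∈ W ∪ U := hN _ hx _ hadj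
      have hyU : (y : V) ∉ U := y.2
      have hyW : (y : V) ∈ W := by
        rcases (Set.mem_union _ _ _).mp this with h' | h'
        · exact h'
        · exact absurd h' hyU
      exact ih hyW
  exact hv2 (key _ _ p hw)

lemma split_contra [Fintype V] {k : ℕ} (hconn : IsKConnected G (k - 1))
    {U W : Set V} (hcard : U.ncard < k - 1) (hW : W.Nonempty)
    (hWU : ∀ w ∈ W, w ∉ U) (hout : ∃ v, v ∉ U ∧ v ∉ W)
    (hN : ∀ w ∈ W, ∀ v, G.Adj w v → v ∈ W ∪ U) : False :=
  induce_not_connected hW hWU hout hN (hconn.2 U hcard)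

lemma order_ge [Fintype V] {k : ℕ} (hconn : IsKConnected G (k - 1))
    {p : Set V × Set V} (hsep : IsSep G p) (hprop : ProperSep p) :
    k - 1 ≤ sepOrder p := by
  by_contra h
  push_neg at h
  refine split_contra hconn h hprop.1 ?_ ?_ ?_
  · rintro w ⟨h1, h2⟩ ⟨h3, h4⟩; exact h2 h4
  · obtain ⟨b, hb⟩ := hprop.2
    exact ⟨b, fun hh => hb.2 hh.1, fun hh => hb.2 hh.1⟩
  · rintro w ⟨hw1, hw2⟩ v hadj
    by_cases hv : v ∈ p.1
    · by_cases hv2 : v ∈ p.2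
      · exact Or.inr ⟨hv, hv2⟩
      · exact Or.inl ⟨hv, hv2⟩
    · exact absurd hadj (hsep.2 w ⟨hw1, hw2⟩ v ⟨mem_univ_or hsep.1 hv, hv⟩)

lemma ncard_pair_le {L1 L2 R1 R2 : Set V} [Fintype V]
    (hu : L1 ∪ L2 ⊆ R1 ∪ R2) (hi : L1 ∩ L2 = R1 ∩ R2) :
    L1.ncard + L2.ncard ≤ R1.ncard + R2.ncard := by
  have : Fintype V := ‹_›
  rw [← Set.ncard_union_add_ncard_inter L1 L2 (Set.toFinite _) (Set.toFinite _),
    ← Set.ncard_union_add_ncard_inter R1 R2 (Set.toFinite _) (Set.toFinite _), hi]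
  exact Nat.add_le_add_right (Set.ncard_le_ncard hu (Set.toFinite _)) _

lemma takeUntil_dropUntil_disj [DecidableEq V] {x y v : V} (P : G.Walk x y)
    (hP : P.IsPath) (hv : v ∈ P.support) :
    ∀ s, s ∈ (P.dropUntil v hv).support → s ≠ v → s ∉ (P.takeUntil v hv).support := by
  have hspec := P.take_spec hv
  have hnodup : P.support.Nodup := hP.support_nodup
  rw [← hspec, Walk.support_append] at hnodup
  have hdisj := List.disjoint_of_nodup_append hnodup
  intro s hs hsv hst
  have : s ∈ (P.dropUntil v hv).support.tail := by
    have := (P.dropUntil v hv).support_eq_cons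
    rw [this] at hs
    rcases List.mem_cons.mp hs with h | h
    · exact absurd h hsv
    · exact h
  exact hdisj hst this

lemma internal_sep_vertex [DecidableEq V] {A B : Set V} (hU : A ∪ B = univ)
    (hE : ∀ a ∈ A \ B, ∀ b ∈ B \ A, ¬G.Adj a b) {x y : V}
    (P : G.Walk x y) (hP : P.IsPath) (hxA : x ∈ A) (hyA : y ∈ A) (hyB : y ∉ B)
    {v : V} (hv : v ∈ P.support) (hvA : v ∉ A) :
    ∃ s ∈ P.support, s ∈ A ∩ B ∧ s ≠ x ∧ s ≠ y := by
  obtain ⟨s, hs, hsAB⟩ := walk_cross hU hE (P.dropUntil v hv).reverse hyA hvA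
  rw [Walk.support_reverse, List.mem_reverse] at hs
  refine ⟨s, P.support_dropUntil_subset hv hs, hsAB, ?_, fun h => hyB (h ▸ hsAB.2)⟩
  intro hsx
  have hsv : s ≠ v := fun h => hvA (h ▸ hsAB.1)
  exact takeUntil_dropUntil_disj P hP hv s hs hsv
    (hsx ▸ Walk.start_mem_support (P.takeUntil v hv))

lemma internal_sep_vertex' [DecidableEq V] {C D : Set V} (hU : C ∪ D = univ)
    (hE : ∀ a ∈ C \ D, ∀ b ∈ D \ C, ¬G.Adj a b) {x y : V}
    (P : G.Walk x y) (hP : P.IsPath) (hxC : x ∈ C) (hxD : x ∉ D) (hyC : y ∈ C)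
    {v : V} (hv : v ∈ P.support) (hvC : v ∉ C) :
    ∃ t ∈ P.support, t ∈ C ∩ D ∧ t ≠ x ∧ t ≠ y := by
  obtain ⟨t, ht, htCD⟩ := walk_cross hU hE (P.takeUntil v hv) hxC hvC
  refine ⟨t, P.support_takeUntil_subset hv ht, htCD, fun h => hxD (h ▸ htCD.2), ?_⟩
  intro hty
  have hyv : y ≠ v := fun h => hvC (h ▸ hty ▸ htCD.1)
  exact takeUntil_dropUntil_disj P hP hv y
    (Walk.end_mem_support (P.dropUntil v hv)) hyv (hty ▸ ht)

lemma second_vertex {x y : V} (P : G.Walk x y) (hP : P.IsPath) (hlen : 2 ≤ P.length) :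
    ∃ u ∈ P.support, u ≠ x ∧ u ≠ y := by
  cases P with
  | nil => simp at hlen
  | @cons _ b _ h P' =>
    refine ⟨b, by simp, fun hbx => G.irrefl (hbx ▸ h), ?_⟩
    intro hby
    subst hby
    cases P' with
    | nil => simp at hlen
    | @cons _ e _ h' P'' =>
      have hnd := hP.support_nodup
      simp only [Walk.support_cons, List.nodup_cons] at hnd
      exact hnd.2.1 (by simpa using Or.inr (Walk.end_mem_support P''))

lemma paths_contra [Fintype V] {k : ℕ} {A B C D : Set V} {x y : V}
    (hpU : A ∪ B = univ) (hqU : C ∪ D = univ)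
    (hEp : ∀ a ∈ A \ B, ∀ b ∈ B \ A, ¬G.Adj a b)
    (hEq : ∀ a ∈ C \ D, ∀ b ∈ D \ C, ¬G.Adj a b)
    (hxS : x ∈ A ∩ B) (hxD : x ∉ D) (hyT : y ∈ C ∩ D) (hyB : y ∉ B)
    (hSc : (A ∩ B).ncard = k - 1) (hTc : (C ∩ D).ncard = k - 1)
    (hz : (A ∩ C).ncard ≤ k - 2) (hdeg : A ∩ C ⊆ B ∪ D) (hk4 : 4 ≤ k)
    (Ps : Fin (3 * (k - 2) / 2) → G.Walk x y)
    (hpath : ∀ i, (Ps i).IsPath) (hlen : ∀ i, 2 ≤ (Ps i).length)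
    (hdisj : ∀ i j, i ≠ j → ∀ v ∈ (Ps i).support, v ∈ (Ps j).support → v = x ∨ v = y) :
    False := by
  classical
  set W : Set V := (A ∩ B) ∪ (C ∩ D) with hW
  set Z : Set V := A ∩ C with hZ
  have hxA : x ∈ A := hxS.1
  have hxC : x ∈ C := mem_univ_or (by rw [Set.union_comm]; exact hqU) hxD
  have hyA : y ∈ A := mem_univ_or (by rw [Set.union_comm]; exact hpU) hyB
  have hyC : y ∈ C := hyT.1
  have hxy : x ≠ y := fun h => hxD (h ▸ hyT.2)
  have hxZ : x ∈ Z := ⟨hxA, hxC⟩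
  have hyZ : y ∈ Z := ⟨hyA, hyC⟩
  -- the finsets of internal W-vertices
  let J : Fin (3 * (k - 2) / 2) → Finset V := fun i =>
    ((Ps i).support.toFinset.filter (fun v => v ∈ W ∧ v ≠ x ∧ v ≠ y))
  have hJmem : ∀ i v, v ∈ J i ↔ v ∈ (Ps i).support ∧ v ∈ W ∧ v ≠ x ∧ v ≠ y := by
    intro i v
    simp [J, List.mem_toFinset]
  have h1 : ∀ i, (J i).Nonempty := by
    intro i
    by_cases hA : ∃ v ∈ (Ps i).support, v ∉ A
    · obtain ⟨v, hv, hvA⟩ := hA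
      obtain ⟨s, hs, hsS, hsx, hsy⟩ :=
        internal_sep_vertex hpU hEp (Ps i) (hpath i) hxA hyA hyB hv hvA
      exact ⟨s, (hJmem i s).mpr ⟨hs, Or.inl hsS, hsx, hsy⟩⟩
    · by_cases hC : ∃ v ∈ (Ps i).support, v ∉ C
      · obtain ⟨v, hv, hvC⟩ := hC
        obtain ⟨t, ht, htT, htx, hty⟩ :=
          internal_sep_vertex' hqU hEq (Ps i) (hpath i) hxC hxD hyC hv hvC
        exact ⟨t, (hJmem i t).mpr ⟨ht, Or.inr htT, htx, hty⟩⟩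
      · push_neg at hA hC
        obtain ⟨u, hu, hux, huy⟩ := second_vertex (Ps i) (hpath i) (hlen i)
        have huS : u ∈ A ∩ B ∨ u ∈ C ∩ D := by
          by_cases huB : u ∈ B
          · exact Or.inl ⟨hA u hu, huB⟩
          · have huD : u ∈ D := by
              rcases (Set.mem_union _ _ _).mp (hdeg ⟨hA u hu, hC u hu⟩) with h | h
              · exact absurd h huB
              · exact h
            exact Or.inr ⟨hC u hu, huD⟩
        exact ⟨u, (hJmem i u).mpr ⟨hu, huS.elim Or.inl Or.inr, hux, huy⟩⟩
  have h2 : ∀ i, (J i).card ≤ 1 → ∀ v ∈ J i, v ∈ Z := by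
    intro i hcard v hv
    by_contra hvZ
    rw [hJmem] at hv
    obtain ⟨hvsup, hvW, hvx, hvy⟩ := hv
    have hex : ∃ w ∈ J i, w ≠ v := by
      by_cases hvA : v ∈ A
      · have hvC : v ∉ C := fun h => hvZ ⟨hvA, h⟩
        obtain ⟨t, ht, htT, htx, hty⟩ :=
          internal_sep_vertex' hqU hEq (Ps i) (hpath i) hxC hxD hyC hvsup hvC
        exact ⟨t, (hJmem i t).mpr ⟨ht, Or.inr htT, htx, hty⟩, fun h => hvC (h ▸ htT.1)⟩
      · obtain ⟨w, hw, hwS, hwx, hwy⟩ :=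
          internal_sep_vertex hpU hEp (Ps i) (hpath i) hxA hyA hyB hvsup hvA
        exact ⟨w, (hJmem i w).mpr ⟨hw, Or.inl hwS, hwx, hwy⟩, fun h => hvA (h ▸ hwS.1)⟩
    obtain ⟨w, hw, hwv⟩ := hex
    have : 1 < (J i).card := Finset.one_lt_card.mpr
      ⟨w, hw, v, (hJmem i v).mpr ⟨hvsup, hvW, hvx, hvy⟩, hwv⟩
    omega
  have hdisjJ : ∀ (i j : Fin (3 * (k - 2) / 2)), i ≠ j → Disjoint (J i) (J j) := by
    intro i j hij
    rw [Finset.disjoint_left]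
    intro v hvi hvj
    rw [hJmem] at hvi hvj
    rcases hdisj i j hij v hvi.1 hvj.1 with h | h
    · exact hvi.2.2.1 h
    · exact hvi.2.2.2 h
  have hxyW : ({x, y} : Set V) ⊆ W := by
    rintro v (rfl | rfl)
    · exact Or.inl hxS
    · exact Or.inr hyT
  have hxyZ : ({x, y} : Set V) ⊆ Z := by
    rintro v (rfl | rfl)
    · exact hxZ
    · exact hyZ
  let Wf : Finset V := (W \ {x, y} : Set V).toFinite.toFinset
  let Zf : Finset V := (Z \ {x, y} : Set V).toFinite.toFinset
  have hsubW : ∀ i, J i ⊆ Wf := by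
    intro i v hv
    rw [hJmem] at hv
    simp only [Wf, Set.Finite.mem_toFinset, Set.mem_diff, Set.mem_insert_iff,
      Set.mem_singleton_iff]
    exact ⟨hv.2.1, by tauto⟩
  have hsum_le : ∑ i, (J i).card ≤ Wf.card := by
    rw [← Finset.card_biUnion (fun i _ j _ h => hdisjJ i j h)]
    exact Finset.card_le_card (fun v hv => by
      obtain ⟨i, _, hvi⟩ := Finset.mem_biUnion.mp hv
      exact hsubW i hvi)
  set s1 := Finset.univ.filter (fun i => (J i).card ≤ 1) with hs1
  have hs1card : s1.card ≤ Zf.card := by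
    have hsub : s1.biUnion J ⊆ Zf := by
      intro v hv
      obtain ⟨i, hi, hvi⟩ := Finset.mem_biUnion.mp hv
      have hiz := (Finset.mem_filter.mp hi).2
      have hvZ := h2 i hiz v hvi
      rw [hJmem] at hvi
      simp only [Zf, Set.Finite.mem_toFinset, Set.mem_diff, Set.mem_insert_iff,
        Set.mem_singleton_iff]
      exact ⟨hvZ, by tauto⟩
    have hcardeq : (s1.biUnion J).card = ∑ i ∈ s1, (J i).card :=
      Finset.card_biUnion (fun i _ j _ h => hdisjJ i j h)
    have : ∑ i ∈ s1, (J i).card = ∑ i ∈ s1, 1 := by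
      refine Finset.sum_congr rfl (fun i hi => ?_)
      have hiz := (Finset.mem_filter.mp hi).2
      have := Finset.card_pos.mpr (h1 i)
      omega
    calc s1.card = ∑ i ∈ s1, 1 := by rw [Finset.sum_const, smul_eq_mul, mul_one]
    _ = (s1.biUnion J).card := by rw [hcardeq, this]
    _ ≤ Zf.card := Finset.card_le_card hsub
  have hsplit : ∑ i ∈ s1, (J i).card + ∑ i ∈ Finset.univ.filter (fun i => ¬((J i).card ≤ 1)),
      (J i).card = ∑ i, (J i).card := by
    rw [hs1]
    exact Finset.sum_filter_add_sum_filter_not _ _ _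
  have hcards : s1.card + (Finset.univ.filter (fun i => ¬((J i).card ≤ 1))).card
      = 3 * (k - 2) / 2 := by
    rw [hs1]
    rw [Finset.card_filter_add_card_filter_not]
    simp
  have hge2 : 2 * (Finset.univ.filter (fun i => ¬((J i).card ≤ 1))).card
      ≤ ∑ i ∈ Finset.univ.filter (fun i => ¬((J i).card ≤ 1)), (J i).card := by
    calc 2 * (Finset.univ.filter (fun i => ¬((J i).card ≤ 1))).card
        = ∑ _i ∈ Finset.univ.filter (fun i => ¬((J i).card ≤ 1)), 2 := by
          rw [Finset.sum_const, smul_eq_mul, mul_comm]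
    _ ≤ _ := Finset.sum_le_sum (fun i hi => by
          have := (Finset.mem_filter.mp hi).2
          omega)
  have hge1 : s1.card ≤ ∑ i ∈ s1, (J i).card := by
    calc s1.card = ∑ _i ∈ s1, 1 := by rw [Finset.sum_const, smul_eq_mul, mul_one]
    _ ≤ _ := Finset.sum_le_sum (fun i _ => Finset.card_pos.mpr (h1 i))
  have nW : Wf.card = (W \ {x, y}).ncard := (Set.ncard_eq_toFinset_card _ _).symm
  have nZ : Zf.card = (Z \ {x, y}).ncard := (Set.ncard_eq_toFinset_card _ _).symm
  have nW2 : (W \ {x, y}).ncard + 2 = W.ncard := by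
    have := Set.ncard_diff_add_ncard_of_subset hxyW (Set.toFinite _)
    rwa [Set.ncard_pair hxy] at this
  have nZ2 : (Z \ {x, y}).ncard + 2 = Z.ncard := by
    have := Set.ncard_diff_add_ncard_of_subset hxyZ (Set.toFinite _)
    rwa [Set.ncard_pair hxy] at this
  have nWc : W.ncard + ((A ∩ B) ∩ (C ∩ D)).ncard = (k - 1) + (k - 1) := by
    rw [hW, Set.ncard_union_add_ncard_inter _ _ (Set.toFinite _) (Set.toFinite _), hSc, hTc]
  omega

lemma degen_contra [Fintype V] {G : SimpleGraph V} {k : ℕ}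
    (hconn : IsKConnected G (k - 1))
    (hpairs : ∀ x y : V, G.Adj x y →
      (k - 3 ≤ {z : V | G.Adj x z ∧ G.Adj y z}.ncard) ∨
      (∃ Ps : Fin (3 * (k - 2) / 2) → G.Walk x y,
        (∀ i, (Ps i).IsPath) ∧ (∀ i, 2 ≤ (Ps i).length) ∧
        ∀ i j, i ≠ j → ∀ v ∈ (Ps i).support, v ∈ (Ps j).support → v = x ∨ v = y)
      ∨ (∃ X : Set V, IsBlock G k X ∧ x ∈ X ∧ y ∈ X))
    {X : Set V} (hXcard : k ≤ X.ncard)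
    {p q : Set V × Set V} (hp : p ∈ Sk G k) (hq : q ∈ Sk G k)
    (hdeg : p.1 ∩ q.1 ⊆ p.2 ∪ q.2)
    (hz : (p.1 ∩ q.1).ncard ≤ k - 2)
    (ha : ((p.1 ∩ p.2) \ q.2).Nonempty)
    (hXB : X ⊆ p.2) : False := by
  classical
  obtain ⟨A, B⟩ := p
  obtain ⟨C, D⟩ := q
  simp only [Sk, Set.mem_setOf_eq] at hp hq
  obtain ⟨hpsep, hpprop, hpord⟩ := hp
  obtain ⟨hqsep, hqprop, hqord⟩ := hq
  simp only at hdeg hz ha hXB hpsep hqsep hpprop hqprop hpord hqord ⊢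
  have hpU : A ∪ B = univ := hpsep.1
  have hqU : C ∪ D = univ := hqsep.1
  have hEp : ∀ a ∈ A \ B, ∀ b ∈ B \ A, ¬G.Adj a b := hpsep.2
  have hEq : ∀ a ∈ C \ D, ∀ b ∈ D \ C, ¬G.Adj a b := hqsep.2
  have hSc : (A ∩ B).ncard = k - 1 := by
    have h1 := order_ge hconn hpsep hpprop
    simp only [sepOrder] at h1 hpord
    omega
  have hTc : (C ∩ D).ncard = k - 1 := by
    have h1 := order_ge hconn hqsep hqprop
    simp only [sepOrder] at h1 hqord
    omega
  have hk1 : 1 ≤ k := by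
    simp only [sepOrder] at hpord; omega
  -- (A∩B)\D ⊆ A∩C, so A∩C is nonempty and k ≥ 3
  have haZ : (A ∩ B) \ D ⊆ A ∩ C := by
    rintro v ⟨⟨h1, h2⟩, h3⟩
    exact ⟨h1, mem_univ_or (by rw [Set.union_comm]; exact hqU) h3⟩
  have hz1 : 1 ≤ (A ∩ C).ncard := by
    obtain ⟨v, hv⟩ := ha
    have : v ∈ A ∩ C := haZ hv
    have := (Set.ncard_pos (Set.toFinite _)).mpr ⟨v, this⟩
    omega
  have hk3 : 3 ≤ k := by omega
  by_cases hedge : ∃ x' y', x' ∈ (A ∩ B) \ D ∧ y' ∈ (C ∩ D) \ B ∧ G.Adj x' y'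
  · obtain ⟨x, y, hx, hy, hadj⟩ := hedge
    have hxA : x ∈ A := hx.1.1
    have hxB : x ∈ B := hx.1.2
    have hxD : x ∉ D := hx.2
    have hyC : y ∈ C := hy.1.1
    have hyD : y ∈ D := hy.1.2
    have hyB : y ∉ B := hy.2
    have hxC : x ∈ C := mem_univ_or (by rw [Set.union_comm]; exact hqU) hxD
    have hyA : y ∈ A := mem_univ_or (by rw [Set.union_comm]; exact hpU) hyB
    have hxy : x ≠ y := fun h => hxD (h ▸ hyD)
    have hxyZ : ({x, y} : Set V) ⊆ A ∩ C := by
      rintro v (rfl | rfl)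
      · exact ⟨hxA, hxC⟩
      · exact ⟨hyA, hyC⟩
    have hz2 : 2 ≤ (A ∩ C).ncard := by
      have := Set.ncard_le_ncard hxyZ (Set.toFinite _)
      rwa [Set.ncard_pair hxy] at this
    have hk4 : 4 ≤ k := by omega
    rcases hpairs x y hadj with hi | hii | hiii
    · -- common neighbours
      have hsub : {z : V | G.Adj x z ∧ G.Adj y z} ⊆ (A ∩ C) \ {x, y} := by
        rintro v ⟨hv1, hv2⟩
        have hvC : v ∈ C := by
          by_contra hvC
          exact hEq x ⟨hxC, hxD⟩ v ⟨mem_univ_or hqU hvC, hvC⟩ hv1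
        have hvA : v ∈ A := by
          by_contra hvA
          exact hEp y ⟨hyA, hyB⟩ v ⟨mem_univ_or hpU hvA, hvA⟩ hv2
        refine ⟨⟨hvA, hvC⟩, ?_⟩
        rintro (rfl | rfl)
        · exact G.irrefl hv1
        · exact G.irrefl hv2
      have hle := Set.ncard_le_ncard hsub (Set.toFinite _)
      have := Set.ncard_diff_add_ncard_of_subset hxyZ (Set.toFinite _)
      rw [Set.ncard_pair hxy] at this
      omega
    · obtain ⟨Ps, h1, h2, h3⟩ := hii
      exact paths_contra hpU hqU hEp hEq ⟨hxA, hxB⟩ hxD ⟨hyC, hyD⟩ hyB hSc hTc hz hdeg hk4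
        Ps h1 h2 h3
    · obtain ⟨X', hX', hxX', hyX'⟩ := hiii
      have h1 : X' ⊆ A := by
        rcases hX'.2.1 (A, B) hpsep hpord with h | h
        · exact h
        · exact absurd (h hyX') hyB
      have h2 : X' ⊆ C := by
        rcases hX'.2.1 (C, D) hqsep hqord with h | h
        · exact h
        · exact absurd (h hxX') hxD
      have h3 : X' ⊆ A ∩ C := fun v hv => ⟨h1 hv, h2 hv⟩
      have := Set.ncard_le_ncard h3 (Set.toFinite _)
      have := hX'.1
      omega
  · push_neg at hedge
    -- no edge between (A∩B)\D and (C∩D)\B; use connectivity with U = A∩B∩D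
    have hUcard : ((A ∩ B) ∩ D).ncard < k - 1 := by
      have h1 := Set.ncard_inter_add_ncard_diff_eq_ncard (A ∩ B) D (Set.toFinite _)
      have h2 : 1 ≤ ((A ∩ B) \ D).ncard := (Set.ncard_pos (Set.toFinite _)).mpr ha
      omega
    refine split_contra hconn hUcard hpprop.1 ?_ ?_ ?_
    · rintro w ⟨hw1, hw2⟩ ⟨⟨h3, h4⟩, h5⟩
      exact hw2 h4
    · have hXU : (X \ ((A ∩ B) ∩ D)).Nonempty := by
        rw [Set.nonempty_iff_ne_empty]
        intro hcon
        have hXsub : X ⊆ (A ∩ B) ∩ D := by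
          intro v hv
          by_contra hvn
          exact absurd (Set.eq_empty_iff_forall_notMem.mp hcon v) (fun h => h ⟨hv, hvn⟩)
        have := Set.ncard_le_ncard hXsub (Set.toFinite _)
        omega
      obtain ⟨v, hv1, hv2⟩ := hXU
      exact ⟨v, hv2, fun hc => hc.2 (hXB hv1)⟩
    · rintro w ⟨hwA, hwB⟩ v hadj
      have hvA : v ∈ A := by
        by_contra hvA
        exact hEp w ⟨hwA, hwB⟩ v ⟨mem_univ_or hpU hvA, hvA⟩ hadj
      by_cases hvB : v ∈ B
      · right
        refine ⟨⟨hvA, hvB⟩, ?_⟩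
        by_contra hvD
        -- v ∈ (A∩B)\D ; w ∈ A\B; derive contradiction
        by_cases hwC : w ∈ C
        · -- w ∈ A∩C ⊆ B∪D, w∉B so w∈D, w∈C∩D\B
          have hwD : w ∈ D := by
            rcases (Set.mem_union _ _ _).mp (hdeg ⟨hwA, hwC⟩) with h | h
            · exact absurd h hwB
            · exact h
          exact hedge v w ⟨⟨hvA, hvB⟩, hvD⟩ ⟨⟨hwC, hwD⟩, hwB⟩ hadj.symm
        · have hwD : w ∈ D := mem_univ_or hqU hwC
          have hvC : v ∈ C := mem_univ_or (by rw [Set.union_comm]; exact hqU) hvD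
          exact hEq v ⟨hvC, hvD⟩ w ⟨hwD, hwC⟩ hadj.symm
      · left
        exact ⟨hvA, hvB⟩

lemma corner_profile [Fintype V] {G : SimpleGraph V} {k : ℕ}
    (hconn : IsKConnected G (k - 1))
    (hpairs : ∀ x y : V, G.Adj x y →
      (k - 3 ≤ {z : V | G.Adj x z ∧ G.Adj y z}.ncard) ∨
      (∃ Ps : Fin (3 * (k - 2) / 2) → G.Walk x y,
        (∀ i, (Ps i).IsPath) ∧ (∀ i, 2 ≤ (Ps i).length) ∧
        ∀ i j, i ≠ j → ∀ v ∈ (Ps i).support, v ∈ (Ps j).support → v = x ∨ v = y)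
      ∨ (∃ X : Set V, IsBlock G k X ∧ x ∈ X ∧ y ∈ X))
    {X : Set V} (hX : IsBlock G k X) {p q : Set V × Set V}
    (hp : p ∈ blockProfile G k X) (hq : q ∈ blockProfile G k X)
    (hcross : ¬Nested p q) :
    sepOrder (p.1 ∪ q.1, p.2 ∩ q.2) < k ∧
      (p.1 ∪ q.1, p.2 ∩ q.2) ∈ blockProfile G k X := by
  classical
  obtain ⟨hpSk, hXB, hXnA⟩ := hp
  obtain ⟨hqSk, hXD, hXnC⟩ := hq
  obtain ⟨hpsep, hpprop, hpord⟩ := hpSk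
  obtain ⟨hqsep, hqprop, hqord⟩ := hqSk
  obtain ⟨A, B⟩ := p
  obtain ⟨C, D⟩ := q
  simp only at hXB hXnA hXD hXnC hpsep hqsep hpprop hqprop hpord hqord hcross ⊢
  have hpU : A ∪ B = univ := hpsep.1
  have hqU : C ∪ D = univ := hqsep.1
  have hEp : ∀ a ∈ A \ B, ∀ b ∈ B \ A, ¬G.Adj a b := hpsep.2
  have hEq : ∀ a ∈ C \ D, ∀ b ∈ D \ C, ¬G.Adj a b := hqsep.2
  have hXcard := hX.1
  have hk1 : 1 ≤ k := by
    have := hpord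
    omega
  have hsubmod : ((A ∪ C) ∩ (B ∩ D)).ncard + ((A ∩ C) ∩ (B ∪ D)).ncard
      ≤ (k - 1) + (k - 1) := by
    have hSc : (A ∩ B).ncard ≤ k - 1 := by
      have h1 := order_ge hconn hpsep hpprop
      have h2 := hpord
      simp only [sepOrder] at h1 h2
      omega
    have hTc : (C ∩ D).ncard ≤ k - 1 := by
      have h1 := order_ge hconn hqsep hqprop
      have h2 := hqord
      simp only [sepOrder] at h1 h2
      omega
    have hle : ((A ∪ C) ∩ (B ∩ D)).ncard + ((A ∩ C) ∩ (B ∪ D)).ncard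
        ≤ (A ∩ B).ncard + (C ∩ D).ncard := by
      apply ncard_pair_le
      · rintro v (⟨hv1, hv2, hv3⟩ | ⟨⟨hv1, hv2⟩, hv3⟩)
        · rcases hv1 with h | h
          · exact Or.inl ⟨h, hv2⟩
          · exact Or.inr ⟨h, hv3⟩
        · rcases hv3 with h | h
          · exact Or.inl ⟨hv1, h⟩
          · exact Or.inr ⟨hv2, h⟩
      · ext v
        simp only [Set.mem_inter_iff, Set.mem_union]
        tauto
    omega
  have horder : ((A ∪ C) ∩ (B ∩ D)).ncard < k := by
    by_cases hdeg : A ∩ C ⊆ B ∪ D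
    · by_contra hY
      push_neg at hY
      have hz : (A ∩ C).ncard ≤ k - 2 := by
        have heq : (A ∩ C) ∩ (B ∪ D) = A ∩ C :=
          Set.inter_eq_self_of_subset_left hdeg
        rw [heq] at hsubmod
        omega
      have hab : ((A ∩ B) \ D).Nonempty ∨ ((C ∩ D) \ B).Nonempty := by
        by_contra hcon
        push_neg at hcon
        obtain ⟨h1, h2⟩ := hcon
        apply hcross
        right; right; left
        constructor
        · -- A ⊆ D
          intro v hv
          by_cases hvB : v ∈ B
          · by_contra hvD
            exact absurd (Set.eq_empty_iff_forall_notMem.mp h1 v) (fun h => h ⟨⟨hv, hvB⟩, hvD⟩)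
          · by_cases hvC : v ∈ C
            · rcases (Set.mem_union _ _ _).mp (hdeg ⟨hv, hvC⟩) with h | h
              · exact absurd h hvB
              · exact h
            · exact mem_univ_or hqU hvC
        · -- C ⊆ B
          intro v hv
          by_cases hvD : v ∈ D
          · by_contra hvB
            exact absurd (Set.eq_empty_iff_forall_notMem.mp h2 v) (fun h => h ⟨⟨hv, hvD⟩, hvB⟩)
          · by_cases hvA : v ∈ A
            · rcases (Set.mem_union _ _ _).mp (hdeg ⟨hvA, hv⟩) with h | h
              · exact h
              · exact absurd h hvD
            · exact mem_univ_or hpU hvA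
      rcases hab with h | h
      · exact degen_contra hconn hpairs hXcard ⟨hpsep, hpprop, hpord⟩ ⟨hqsep, hqprop, hqord⟩
          hdeg hz h hXB
      · refine degen_contra hconn hpairs hXcard ⟨hqsep, hqprop, hqord⟩ ⟨hpsep, hpprop, hpord⟩
          ?_ ?_ h hXD
        · rw [Set.inter_comm, Set.union_comm]
          exact hdeg
        · rw [Set.inter_comm]
          exact hz
    · -- non-degenerate : opposite corner is a proper separation, so has order ≥ k-1
      rw [Set.not_subset] at hdeg
      obtain ⟨u, huAC, huBD⟩ := hdeg
      have hosep : IsSep G (A ∩ C, B ∪ D) := by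
        constructor
        · apply Set.eq_univ_of_forall
          intro v
          by_cases hvB : v ∈ B
          · exact Or.inr (Or.inl hvB)
          · by_cases hvD : v ∈ D
            · exact Or.inr (Or.inr hvD)
            · exact Or.inl ⟨mem_univ_or (by rw [Set.union_comm]; exact hpU) hvB,
                mem_univ_or (by rw [Set.union_comm]; exact hqU) hvD⟩
        · rintro a ⟨⟨haA, haC⟩, haBD⟩ b ⟨hbBD, hbAC⟩
          have haB : a ∉ B := fun h => haBD (Or.inl h)
          have haD : a ∉ D := fun h => haBD (Or.inr h)
          by_cases hbA : b ∈ A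
          · have hbC : b ∉ C := fun h => hbAC ⟨hbA, h⟩
            have hbD : b ∈ D := mem_univ_or hqU hbC
            exact hEq a ⟨haC, haD⟩ b ⟨hbD, hbC⟩
          · exact hEp a ⟨haA, haB⟩ b ⟨mem_univ_or hpU hbA, hbA⟩
      have hoprop : ProperSep (A ∩ C, B ∪ D) := by
        constructor
        · exact ⟨u, huAC, huBD⟩
        · rw [Set.nonempty_iff_ne_empty]
          intro hcon
          apply hXnA
          have hAuniv : A = univ := by
            apply Set.eq_univ_of_forall
            intro v
            by_cases hvA : v ∈ A
            · exact hvA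
            · have hvB : v ∈ B := mem_univ_or hpU hvA
              have : v ∈ (B ∪ D) \ (A ∩ C) → False :=
                fun h => absurd (Set.eq_empty_iff_forall_notMem.mp hcon v) (fun hh => hh h)
              by_contra hvA2
              exact this ⟨Or.inl hvB, fun hh => hvA2 hh.1⟩
          rw [hAuniv]
          exact Set.subset_univ X
      have := order_ge hconn hosep hoprop
      simp only [sepOrder] at this
      omega
  refine ⟨?_, ?_, ?_, ?_⟩
  · simpa [sepOrder] using horder
  · -- (A ∪ C, B ∩ D) ∈ Sk
    refine ⟨?_, ?_, ?_⟩
    · constructor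
      · apply Set.eq_univ_of_forall
        intro v
        by_cases hvA : v ∈ A
        · exact Or.inl (Or.inl hvA)
        · by_cases hvC : v ∈ C
          · exact Or.inl (Or.inr hvC)
          · exact Or.inr ⟨mem_univ_or hpU hvA, mem_univ_or hqU hvC⟩
      · rintro a ⟨haAC, haBD⟩ b ⟨⟨hbB, hbD⟩, hbAC⟩
        have hbA : b ∉ A := fun h => hbAC (Or.inl h)
        have hbC : b ∉ C := fun h => hbAC (Or.inr h)
        by_cases haB : a ∈ B
        · have haD : a ∉ D := fun h => haBD ⟨haB, h⟩
          have haC : a ∈ C := mem_univ_or (by rw [Set.union_comm]; exact hqU) haD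
          exact hEq a ⟨haC, haD⟩ b ⟨hbD, hbC⟩
        · have haA : a ∈ A := mem_univ_or (by rw [Set.union_comm]; exact hpU) haB
          exact hEp a ⟨haA, haB⟩ b ⟨hbB, hbA⟩
    · constructor
      · obtain ⟨v, hv1, hv2⟩ := hpprop.1
        exact ⟨v, Or.inl hv1, fun h => hv2 h.1⟩
      · have : (X \ ((A ∪ C) ∩ (B ∩ D))).Nonempty := by
          rw [Set.nonempty_iff_ne_empty]
          intro hcon
          have hXsub : X ⊆ (A ∪ C) ∩ (B ∩ D) := by
            intro v hv
            by_contra hvn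
            exact absurd (Set.eq_empty_iff_forall_notMem.mp hcon v) (fun h => h ⟨hv, hvn⟩)
          have := Set.ncard_le_ncard hXsub (Set.toFinite _)
          omega
        obtain ⟨v, hv1, hv2⟩ := this
        refine ⟨v, ⟨hXB hv1, hXD hv1⟩, fun h => hv2 ⟨h, hXB hv1, hXD hv1⟩⟩
    · simpa [sepOrder] using horder
  · exact fun v hv => ⟨hXB hv, hXD hv⟩
  · -- ¬ X ⊆ A ∪ C
    intro hXsub
    have h1 : X ⊆ (A ∪ C) ∩ (B ∩ D) := fun v hv => ⟨hXsub hv, hXB hv, hXD hv⟩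
    have := Set.ncard_le_ncard h1 (Set.toFinite _)
    omega

end Helpers

/-- Under the hypotheses of Theorem 3.4, every `k`-block of `G` is well separated in
`S_k`; indeed for any two crossing separations `(A,B), (C,D) ∈ P_k(X)` the corner
separation `(A ∪ C, B ∩ D)` has order `< k` and lies in `P_k(X)`. -/
theorem stmt_11 {V : Type*} [Fintype V] (G : SimpleGraph V) (k : ℕ)
    (hconn : IsKConnected G (k - 1))
    (hpairs : ∀ x y : V, G.Adj x y →
      (k - 3 ≤ {z : V | G.Adj x z ∧ G.Adj y z}.ncard) ∨
      (∃ Ps : Fin (3 * (k - 2) / 2) → G.Walk x y,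
        (∀ i, (Ps i).IsPath) ∧ (∀ i, 2 ≤ (Ps i).length) ∧
        ∀ i j, i ≠ j → ∀ v ∈ (Ps i).support, v ∈ (Ps j).support → v = x ∨ v = y) ∨
      (∃ X : Set V, IsBlock G k X ∧ x ∈ X ∧ y ∈ X)) :
    ∀ X : Set V, IsBlock G k X →
      WellSepIn G k X (Sk G k) ∧
      ∀ p ∈ blockProfile G k X, ∀ q ∈ blockProfile G k X, ¬Nested p q →
        sepOrder (p.1 ∪ q.1, p.2 ∩ q.2) < k ∧
        (p.1 ∪ q.1, p.2 ∩ q.2) ∈ blockProfile G k X := by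
  intro X hX
  constructor
  · intro p q hp hq
    by_contra hn
    have hp1 : p ∈ blockProfile G k X := hp.1.1
    have hq1 : q ∈ blockProfile G k X := hq.1.1
    have hcp := corner_profile hconn hpairs hX hp1 hq1 hn
    have hple : SepLE p (p.1 ∪ q.1, p.2 ∩ q.2) :=
      ⟨Set.subset_union_left, Set.inter_subset_left⟩
    have hqle : SepLE q (p.1 ∪ q.1, p.2 ∩ q.2) :=
      ⟨Set.subset_union_right, Set.inter_subset_right⟩
    have hepr : (p.1 ∪ q.1, p.2 ∩ q.2) = p := hp.2 _ ⟨hcp.2, hcp.2.1⟩ hple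
    have heqr : (p.1 ∪ q.1, p.2 ∩ q.2) = q := hq.2 _ ⟨hcp.2, hcp.2.1⟩ hqle
    have hpq : p = q := hepr.symm.trans heqr
    apply hn
    rw [hpq]
    exact Or.inl ⟨subset_rfl, subset_rfl⟩
  · intro p hp q hq hcross
    exact corner_profile hconn hpairs hX hp hq hcross

end CanonicalTD
end

section
/- Let G be a finite graph, k ∈ ℕ, and let X be a k-block of G. Then the separations in S(X) are pairwise nested: any two tight separations (A,B) and (C,D) of G with X ⊆ B, X ⊆ D, A∖B the vertex set of a component of G − X, and C∖D the vertex set of a component of G − X, are nested. -/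
open SimpleGraph Set

namespace CanonicalTD

variable {V : Type*} {ι : Type*}

private lemma induce_singleton_connected {V : Type*} (G : SimpleGraph V) (v : V) :
    (G.induce {v}).Connected := by
  rw [SimpleGraph.connected_iff]
  refine ⟨?_, ⟨⟨v, rfl⟩⟩⟩
  rintro ⟨a, ha⟩ ⟨b, hb⟩
  simp only [Set.mem_singleton_iff] at ha hb
  subst ha; subst hb
  exact SimpleGraph.Reachable.refl _

/-- A component is closed under adjacency within `Xᶜ`. -/
private lemma comp_closed {V : Type*} {G : SimpleGraph V} {X D : Set V}
    (hD : IsCompOf G X D) {v d : V} (hv : v ∈ Xᶜ) (hd : d ∈ D) (hadj : G.Adj d v) :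
    v ∈ D := by
  obtain ⟨hsub, hconn, hmax⟩ := hD
  have hconn' : (G.induce (D ∪ {v})).Connected :=
    SimpleGraph.connected_induce_union hconn.preconnected
      (induce_singleton_connected G v).preconnected hd rfl hadj
  have := hmax (D ∪ {v}) Set.subset_union_left
    (Set.union_subset hsub (by simpa using hv)) hconn'
  rw [← this]; exact Or.inr rfl

/-- Two components are equal or disjoint. -/
private lemma comp_eq_or_disjoint {V : Type*} {G : SimpleGraph V} {X D₁ D₂ : Set V}
    (h₁ : IsCompOf G X D₁) (h₂ : IsCompOf G X D₂) :
    D₁ = D₂ ∨ D₁ ∩ D₂ = ∅ := by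
  by_cases hne : (D₁ ∩ D₂).Nonempty
  · left
    have hconn : (G.induce (D₁ ∪ D₂)).Connected :=
      SimpleGraph.induce_union_connected h₁.2.1.preconnected h₂.2.1.preconnected hne
    have e1 := h₁.2.2 (D₁ ∪ D₂) Set.subset_union_left
      (Set.union_subset h₁.1 h₂.1) hconn
    have e2 := h₂.2.2 (D₁ ∪ D₂) Set.subset_union_right
      (Set.union_subset h₁.1 h₂.1) hconn
    exact e1.symm.trans e2
  · right; exact Set.not_nonempty_iff_eq_empty.mp hne

/-- For a separation, `p.2 = (p.1 \ p.2)ᶜ`. -/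
private lemma sep_snd_eq {V : Type*} {G : SimpleGraph V} {p : Set V × Set V}
    (hp : IsSep G p) : p.2 = (p.1 \ p.2)ᶜ := by
  ext v
  constructor
  · intro hv h; exact h.2 hv
  · intro hv
    by_contra h
    have : v ∈ p.1 := by
      have h1 : v ∈ p.1 ∪ p.2 := by rw [hp.1]; trivial
      rcases h1 with h1 | h1
      · exact h1
      · exact absurd h1 h
    exact hv ⟨this, h⟩

/-- The separations in `S(X)` are pairwise nested. -/
theorem stmt_12 {V : Type*} [Fintype V] (G : SimpleGraph V) (k : ℕ)
    (X : Set V) (hX : IsBlock G k X) :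
    ∀ p ∈ SX G X, ∀ q ∈ SX G X, Nested p q := by
  rintro p ⟨hpSep, hpTight, hpX, hpComp⟩ q ⟨hqSep, hqTight, hqX, hqComp⟩
  have hpB : p.2 = (p.1 \ p.2)ᶜ := sep_snd_eq hpSep
  have hqB : q.2 = (q.1 \ q.2)ᶜ := sep_snd_eq hqSep
  rcases comp_eq_or_disjoint hpComp hqComp with heq | hdisj
  · -- components equal: p = q, use SepLE p q
    have hBD : p.2 = q.2 := by rw [hpB, hqB, heq]
    left
    constructor
    · -- p.1 ⊆ q.1
      intro v hv
      by_cases hv2 : v ∈ p.2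
      · -- v ∈ p.1 ∩ p.2: tight gives neighbour in p.1 \ p.2 = q.1 \ q.2
        obtain ⟨⟨a, ha, hadj⟩, -⟩ := hpTight v ⟨hv, hv2⟩
        rw [heq] at ha
        by_contra hvq
        have hvD : v ∈ q.2 := hBD ▸ hv2
        exact hqSep.2 a ha v ⟨hvD, hvq⟩ hadj.symm
      · have : v ∈ p.1 \ p.2 := ⟨hv, hv2⟩
        rw [heq] at this
        exact this.1
    · exact hBD.symm.subset
  · -- components disjoint: SepLE p q.swap, i.e. p.1 ⊆ q.2 ∧ q.1 ⊆ p.2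
    right; right; left
    have key : ∀ r s : Set V × Set V, IsSep G r → TightSep G r → X ⊆ r.2 →
        IsCompOf G X (r.1 \ r.2) → IsCompOf G X (s.1 \ s.2) →
        (r.1 \ r.2) ∩ (s.1 \ s.2) = ∅ → r.2 = (r.1 \ r.2)ᶜ → s.2 = (s.1 \ s.2)ᶜ →
        r.1 ⊆ s.2 := by
      intro r s hrSep hrTight hrX hrComp hsComp hd hrB hsB
      intro v hv
      rw [hsB]
      intro hvD
      by_cases hv2 : v ∈ r.2
      · -- v ∈ r.1 ∩ r.2, has neighbour a ∈ r.1 \ r.2 ⊆ Xᶜ; v in component s.1\s.2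
        obtain ⟨⟨a, ha, hadj⟩, -⟩ := hrTight v ⟨hv, hv2⟩
        have haX : a ∈ Xᶜ := hrComp.1 ha
        have : a ∈ s.1 \ s.2 := comp_closed hsComp haX hvD hadj
        have : a ∈ (r.1 \ r.2) ∩ (s.1 \ s.2) := ⟨ha, this⟩
        rw [hd] at this; exact this
      · have : v ∈ (r.1 \ r.2) ∩ (s.1 \ s.2) := ⟨⟨hv, hv2⟩, hvD⟩
        rw [hd] at this; exact this
    constructor
    · exact key p q hpSep hpTight hpX hpComp hqComp hdisj hpB hqB
    · exact key q p hqSep hqTight hqX hqComp hpComp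
        (by rw [Set.inter_comm]; exact hdisj) hqB hpB

end CanonicalTD
end

section
/- Let G be a finite graph, k ∈ ℕ, and let X be a k-block of G. If some separation (A,B) ∈ S(X) has order at least k, then X is not well separated in the set S_k of all proper separations of G of order < k: there exist two crossing ≤-maximal elements of P_k(X). Consequently, if X is well separated in S_k, then every separation in S(X) has order < k. -/
open SimpleGraph Set

namespace CanonicalTD

variable {V : Type*} {ι : Type*}

section Aux

variable {V : Type*}

private lemma sepLE_trans {p q r : Set V × Set V} (h1 : SepLE p q) (h2 : SepLE q r) :
    SepLE p r := ⟨h1.1.trans h2.1, h2.2.trans h1.2⟩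

private lemma isSep_swap {G : SimpleGraph V} {p : Set V × Set V} (h : IsSep G p) :
    IsSep G p.swap :=
  ⟨by simpa [Set.union_comm] using h.1, fun a ha b hb hadj => h.2 b hb a ha hadj.symm⟩

private lemma sepOrder_swap (p : Set V × Set V) : sepOrder p.swap = sepOrder p := by
  simp [sepOrder, Set.inter_comm]

private lemma isSep_mem_or {G : SimpleGraph V} {p : Set V × Set V} (h : IsSep G p) (v : V) :
    v ∈ p.1 ∨ v ∈ p.2 := by
  have : v ∈ p.1 ∪ p.2 := by rw [h.1]; trivial
  exact this

/-- In a finite setting, every element of a set of separations lies below a maximal one. -/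
private lemma exists_max_above [Finite V] {M : Set (Set V × Set V)} {p : Set V × Set V}
    (hp : p ∈ M) : ∃ m, MaxIn M m ∧ SepLE p m := by
  classical
  set s : Set (Set V × Set V) := {q ∈ M | SepLE p q} with hs
  have hsfin : s.Finite := Set.toFinite _
  have hsne : s.Nonempty := ⟨p, hp, ⟨subset_rfl, subset_rfl⟩⟩
  obtain ⟨m, hm, hmax⟩ := hsfin.exists_maximalFor
    (fun q => ((q.1 : Set V), OrderDual.toDual q.2)) s hsne
  refine ⟨m, ⟨hm.1, ?_⟩, hm.2⟩
  intro q hq hle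
  have hq' : q ∈ s := ⟨hq, sepLE_trans hm.2 hle⟩
  have := le_antisymm (hmax hq' ⟨hle.1, hle.2⟩) ⟨hle.1, hle.2⟩
  have := this.symm
  have h1 : m.1 = q.1 := congrArg Prod.fst this
  have h2 : OrderDual.toDual m.2 = OrderDual.toDual q.2 := congrArg Prod.snd this
  exact (Prod.ext h1.symm (OrderDual.toDual_inj.mp h2).symm)

/-- A walk from a vertex satisfying `P` to one not satisfying `P` crosses the boundary. -/
private lemma walk_cross_s13 {β : Type*} {H : SimpleGraph β} (P : β → Prop) :
    ∀ {a b : β} (_ : H.Walk a b), P a → ¬P b →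
      ∃ x y, H.Adj x y ∧ P x ∧ ¬P y := by
  intro a b w
  induction w with
  | nil => intro h h'; exact absurd h h'
  | @cons u v c h w ih =>
    intro ha hb
    by_cases hc : P v
    · exact ih hc hb
    · exact ⟨u, v, h, ha, hc⟩

/-- Adding a vertex adjacent to a connected induced subgraph keeps it connected. -/
private lemma connected_insert {G : SimpleGraph V} {D : Set V} {v a : V}
    (hD : (G.induce D).Connected) (ha : a ∈ D) (hadj : G.Adj v a) :
    (G.induce (insert v D)).Connected := by
  have hsub : D ⊆ insert v D := Set.subset_insert _ _
  let f : G.induce D →g G.induce (insert v D) :=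
    ⟨fun x => ⟨x.1, hsub x.2⟩, fun {x y} h => h⟩
  have key : ∀ x : (insert v D : Set V),
      (G.induce (insert v D)).Reachable x ⟨a, hsub ha⟩ := by
    rintro ⟨x, hx⟩
    rcases hx with rfl | hxD
    · exact SimpleGraph.Adj.reachable (by exact hadj)
    · have := hD.preconnected ⟨x, hxD⟩ ⟨a, ha⟩
      exact this.map f
  constructor
  intro x y
  exact (key x).trans (key y).symm

/-- The separator of a tight separation in `S(X)` is contained in `X`. -/
private lemma sep_subset_block {G : SimpleGraph V} {X : Set V} {p : Set V × Set V}
    (hp : p ∈ SX G X) : p.1 ∩ p.2 ⊆ X := by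
  obtain ⟨hSep, hTight, hXB, hComp⟩ := hp
  intro w hw
  by_contra hwX
  obtain ⟨⟨a, haD, hadj⟩, -⟩ := hTight w hw
  have hconn : (G.induce (insert w (p.1 \ p.2))).Connected :=
    connected_insert hComp.2.1 haD hadj
  have hins : insert w (p.1 \ p.2) ⊆ Xᶜ := by
    intro z hz
    rcases hz with rfl | hz
    · exact hwX
    · exact hComp.1 hz
  have := hComp.2.2 _ (Set.subset_insert _ _) hins hconn
  have hwD : w ∈ p.1 \ p.2 := this ▸ Set.mem_insert _ _
  exact hwD.2 hw.2

/-- Maximal elements of the block profile that are nested satisfy `m.1 ⊆ m'.2`. -/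
private lemma max_subset {G : SimpleGraph V} {k : ℕ} {X : Set V} {m m' : Set V × Set V}
    (hm : MaxIn (blockProfile G k X) m) (hm' : MaxIn (blockProfile G k X) m')
    (hne : m ≠ m') (hnest : Nested m m') : m.1 ⊆ m'.2 := by
  rcases hnest with h | h | h | h
  · exact absurd (hm.2 m' hm'.1 h) (Ne.symm hne)
  · exact absurd (hm'.2 m hm.1 h) hne
  · exact h.1
  · -- SepLE m'.swap m : m'.2 ⊆ m.1 and m.2 ⊆ m'.1; then X ⊆ m.2 ⊆ m'.1, contradiction
    exact absurd (hm.1.2.1.trans h.2) hm'.1.2.2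

/-- Every vertex outside a `k`-block fails some maximal element of the profile. -/
private lemma exists_max_fail [Finite V] {G : SimpleGraph V} {k : ℕ} {X : Set V}
    (hX : IsBlock G k X) {v : V} (hv : v ∉ X) :
    ∃ m, MaxIn (blockProfile G k X) m ∧ v ∈ m.1 \ m.2 := by
  classical
  obtain ⟨hcard, hins, hmaxX⟩ := hX
  have hnotins : ¬ Inseparable' G k (insert v X) := by
    intro h
    have := hmaxX _ h (Set.subset_insert _ _)
    exact hv (this ▸ Set.mem_insert _ _)
  rw [Inseparable'] at hnotins
  push_neg at hnotins
  obtain ⟨q, hqSep, hqord, hq1, hq2⟩ := hnotins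
  -- orient q so that X ⊆ side 2
  have hX12 : X ⊆ q.1 ∨ X ⊆ q.2 := hins q hqSep hqord
  have main : ∀ r : Set V × Set V, IsSep G r → sepOrder r < k →
      ¬ insert v X ⊆ r.1 → ¬ insert v X ⊆ r.2 → X ⊆ r.2 →
      ∃ p ∈ blockProfile G k X, v ∈ p.1 \ p.2 := by
    intro r hrSep hrord hr1 hr2 hXr
    have hvr2 : v ∉ r.2 := fun hvr => hr2 (Set.insert_subset hvr hXr)
    have hvr1 : v ∈ r.1 := (isSep_mem_or hrSep v).resolve_right hvr2
    have hXr1 : ¬ X ⊆ r.1 := fun hXr1 => hr1 (Set.insert_subset hvr1 hXr1)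
    obtain ⟨x, hxX, hxr1⟩ := Set.not_subset.mp hXr1
    refine ⟨r, ⟨⟨hrSep, ⟨⟨v, hvr1, hvr2⟩, ⟨x, hXr hxX, hxr1⟩⟩, hrord⟩, hXr, hXr1⟩,
      hvr1, hvr2⟩
  have hex : ∃ p ∈ blockProfile G k X, v ∈ p.1 \ p.2 := by
    rcases hX12 with hXq | hXq
    · refine main q.swap (isSep_swap hqSep) (by rwa [sepOrder_swap]) ?_ ?_ hXq
      · exact hq2
      · exact hq1
    · exact main q hqSep hqord hq1 hq2 hXq
  obtain ⟨p, hp, hvp⟩ := hex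
  obtain ⟨m, hm, hpm⟩ := exists_max_above hp
  exact ⟨m, hm, hpm.1 hvp.1, fun h => hvp.2 (hpm.2 h)⟩

/-- Key lemma: if the maximal elements of the profile are pairwise nested, then every
separation in `S(X)` has order `< k`. -/
private lemma key_lemma [Finite V] {G : SimpleGraph V} {k : ℕ} {X : Set V}
    (hX : IsBlock G k X)
    (hnest : ∀ p q : Set V × Set V, MaxIn (blockProfile G k X) p →
      MaxIn (blockProfile G k X) q → Nested p q) :
    ∀ p ∈ SX G X, sepOrder p < k := by
  classical
  intro p hp
  by_contra hord
  push_neg at hord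
  obtain ⟨hSep, hTight, hXB, hComp⟩ := hp
  have hNX : p.1 ∩ p.2 ⊆ X := sep_subset_block ⟨hSep, hTight, hXB, hComp⟩
  -- D is nonempty
  have hDconn : (G.induce (p.1 \ p.2)).Connected := hComp.2.1
  obtain ⟨⟨d₀, hd₀D⟩⟩ := hDconn.nonempty
  have hd₀X : d₀ ∉ X := fun h => hComp.1 hd₀D h
  obtain ⟨m₀, hm₀, hd₀m₀⟩ := exists_max_fail hX hd₀X
  have hm₀prof := hm₀.1
  have hm₀Sep : IsSep G m₀ := hm₀prof.1.1
  have hm₀ord : sepOrder m₀ < k := hm₀prof.1.2.2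
  have hXm₀ : X ⊆ m₀.2 := hm₀prof.2.1
  -- find x ∈ (p.1 ∩ p.2) \ m₀.1
  have hnsub : ¬ (p.1 ∩ p.2 ⊆ m₀.1 ∩ m₀.2) := by
    intro hsub
    have := Set.ncard_le_ncard hsub (Set.toFinite _)
    exact absurd (hord.trans this) (not_le_of_gt hm₀ord)
  obtain ⟨x, hxN, hxm⟩ := Set.not_subset.mp hnsub
  have hxX : x ∈ X := hNX hxN
  have hxm₀2 : x ∈ m₀.2 := hXm₀ hxX
  have hxm₀1 : x ∉ m₀.1 := fun h => hxm ⟨h, hxm₀2⟩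
  -- x has a neighbour d'' in D
  obtain ⟨⟨d'', hd''D, hxd''⟩, -⟩ := hTight x hxN
  have hd''m₀2 : d'' ∈ m₀.2 := by
    by_contra h
    have hd''1 : d'' ∈ m₀.1 := (isSep_mem_or hm₀Sep d'').resolve_right h
    exact hm₀Sep.2 d'' ⟨hd''1, h⟩ x ⟨hxm₀2, hxm₀1⟩ hxd''.symm
  -- find an edge of D crossing the boundary of U := m₀.1 \ m₀.2
  have hd''U : ¬ ((d'' : V) ∈ m₀.1 \ m₀.2) := fun h => h.2 hd''m₀2
  obtain ⟨w⟩ := hDconn.preconnected ⟨d₀, hd₀D⟩ ⟨d'', hd''D⟩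
  obtain ⟨dx, dy, hAdj, hPx, hPy⟩ :=
    walk_cross_s13 (fun z : (p.1 \ p.2 : Set V) => (z : V) ∈ m₀.1 \ m₀.2) w hd₀m₀ hd''U
  set d : V := (dx : V) with hd
  set d' : V := (dy : V) with hd'
  have hdD : d ∈ p.1 \ p.2 := dx.2
  have hd'D : d' ∈ p.1 \ p.2 := dy.2
  have hGdd' : G.Adj d d' := hAdj
  have hdU : d ∈ m₀.1 \ m₀.2 := hPx
  have hd'm₀2 : d' ∈ m₀.2 := by
    by_contra h
    exact hPy ⟨(isSep_mem_or hm₀Sep d').resolve_right h, h⟩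
  -- d' fails some maximal m₁ ≠ m₀
  have hd'X : d' ∉ X := fun h => hComp.1 hd'D h
  obtain ⟨m₁, hm₁, hd'm₁⟩ := exists_max_fail hX hd'X
  have hne : m₁ ≠ m₀ := by
    intro h; subst h; exact hd'm₁.2 hd'm₀2
  have hm₁Sep : IsSep G m₁ := hm₁.1.1.1
  -- d ∈ m₁.2
  have hdm₁2 : d ∈ m₁.2 := by
    by_cases h : d ∈ m₁.2
    · exact h
    · have hdm₁1 : d ∈ m₁.1 := (isSep_mem_or hm₁Sep d).resolve_right h
      -- then d fails both m₀ and m₁; but m₀.1 ⊆ m₁.2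
      have := max_subset hm₀ hm₁ (Ne.symm hne) (hnest m₀ m₁ hm₀ hm₁)
      exact absurd (this hdU.1) h
  -- d ∈ m₁.1, else edge between the two strict sides of m₁
  have hdm₁1 : d ∈ m₁.1 := by
    by_contra h
    exact hm₁Sep.2 d' hd'm₁ d ⟨hdm₁2, h⟩ hGdd'.symm
  -- m₁.1 ⊆ m₀.2 contradicts d ∈ m₀.1 \ m₀.2
  have := max_subset hm₁ hm₀ hne (hnest m₁ m₀ hm₁ hm₀)
  exact hdU.2 (this hdm₁1)

end Aux

/-- If some separation in `S(X)` has order at least `k`, then `X` is not well separated in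
`S_k`: there are two crossing `≤`-maximal elements of `P_k(X)`. Consequently, if `X` is
well separated in `S_k` then every separation in `S(X)` has order `< k`. -/
theorem stmt_13 {V : Type*} [Fintype V] (G : SimpleGraph V) (k : ℕ)
    (X : Set V) (hX : IsBlock G k X) :
    ((∃ p ∈ SX G X, k ≤ sepOrder p) →
      ∃ p q : Set V × Set V, MaxIn (blockProfile G k X) p ∧
        MaxIn (blockProfile G k X) q ∧ ¬Nested p q) ∧
    ((∀ p q : Set V × Set V, MaxIn (blockProfile G k X) p →
        MaxIn (blockProfile G k X) q → Nested p q) →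
      ∀ p ∈ SX G X, sepOrder p < k) := by
  classical
  have key := @key_lemma V _ G k X hX
  constructor
  · rintro ⟨p, hpSX, hpk⟩
    by_contra hcon
    push_neg at hcon
    exact absurd hpk (not_le_of_gt (key hcon p hpSX))
  · exact fun hnest p hp => key hnest p hp


end CanonicalTD
end
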